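/- arXiv:2509.20521 — 7 statements merged into one kernel-verified Lean document; each statement's English description precedes it below -/
import Mathlib

section
/- The number of compositions (c_1, ..., c_t) of n into positive integers satisfying c_{2i-1} > c_{2i} for every i with 2i ≤ t equals the n-th Fibonacci number F_n (with F_0 = 0, F_1 = 1). -/
/-- `l` is a composition of `n`: a list of positive integers summing to `n`. -/
def IsComposition (n : ℕ) (l : List ℕ) : Prop := (∀ x ∈ l, 0 < x) ∧ l.sum = n

/-- The scaled Arndt condition: `s * c_{2i-1} > t * c_{2i}` for each pair
(0-indexed: `s * l[2i] > t * l[2i+1]`). -/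
def ArndtCond (s t : ℕ) (l : List ℕ) : Prop :=
  ∀ i : ℕ, 2 * i + 1 < l.length → t * l[2 * i + 1]! < s * l[2 * i]!

def ar : List ℕ → Bool
  | [] => true
  | [_] => true
  | a :: b :: r => (decide (b < a)) && ar r

lemma ar_cons_cons {a b : ℕ} {r : List ℕ} :
    ar (a :: b :: r) = true ↔ b < a ∧ ar r = true := by
  simp [ar]

lemma arndt_cons_cons (a b : ℕ) (r : List ℕ) :
    ArndtCond 1 1 (a :: b :: r) ↔ b < a ∧ ArndtCond 1 1 r := by
  constructor
  · intro h
    refine ⟨by simpa using h 0 (by simp), fun i hi => ?_⟩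
    have := h (i + 1) (by simp; omega)
    have e : 2 * (i + 1) + 1 = (2 * i + 1) + 1 + 1 := by ring
    have e2 : 2 * (i + 1) = (2 * i) + 1 + 1 := by ring
    rw [e, e2] at this
    simpa using this
  · rintro ⟨h1, h2⟩ i hi
    match i with
    | 0 => simpa using h1
    | i + 1 =>
      have e : 2 * (i + 1) + 1 = (2 * i + 1) + 1 + 1 := by ring
      have e2 : 2 * (i + 1) = (2 * i) + 1 + 1 := by ring
      rw [e, e2]
      simp only [List.getElem!_cons_succ]
      exact h2 i (by simp at hi; omega)

lemma arndt_iff (l : List ℕ) : ArndtCond 1 1 l ↔ ar l = true := by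
  induction l using ar.induct with
  | case1 => simp [ar, ArndtCond]
  | case2 a => simp [ar]; intro i hi; simp at hi
  | case3 a b r ih => rw [arndt_cons_cons, ar_cons_cons, ih]

def compS (n : ℕ) : Finset (List ℕ) :=
  (Finset.univ : Finset (Composition n)).image Composition.blocks

lemma mem_compS {n : ℕ} {l : List ℕ} :
    l ∈ compS n ↔ (∀ x ∈ l, 0 < x) ∧ l.sum = n := by
  simp only [compS, Finset.mem_image, Finset.mem_univ, true_and]
  constructor
  · rintro ⟨c, rfl⟩
    exact ⟨fun x hx => c.blocks_pos hx, c.blocks_sum⟩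
  · rintro ⟨h1, h2⟩
    exact ⟨⟨l, fun {i} hi => h1 i hi, h2⟩, rfl⟩

def S (n : ℕ) : Finset (List ℕ) := (compS n).filter (fun l => ar l = true)

lemma mem_S {n : ℕ} {l : List ℕ} :
    l ∈ S n ↔ (∀ x ∈ l, 0 < x) ∧ l.sum = n ∧ ar l = true := by
  simp [S, mem_compS, and_assoc]

def hd2 : List ℕ → Bool
  | a :: b :: _ => a == b + 1
  | _ => false

def D (n : ℕ) : Finset (List ℕ) := (S n).filter (fun l => hd2 l = true)

lemma S_zero : S 0 = {[]} := by
  ext l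
  simp only [mem_S, Finset.mem_singleton]
  constructor
  · rintro ⟨h1, h2, -⟩
    cases l with
    | nil => rfl
    | cons a r => exact absurd h2 (by have := h1 a (by simp); simp; omega)
  · rintro rfl; simp [ar]

lemma sum_one {l : List ℕ} (h1 : ∀ x ∈ l, 0 < x) (h2 : l.sum = 1) : l = [1] := by
  match l with
  | [] => simp at h2
  | a :: r =>
    have ha := h1 a (by simp)
    simp at h2
    have : a = 1 := by omega
    subst this
    have hr0 : r.sum = 0 := by omega
    match r with
    | [] => rfl
    | b :: r' =>
      have hb := h1 b (by simp)
      simp at hr0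
      omega

lemma S_one : S 1 = {[1]} := by
  ext l
  simp only [mem_S, Finset.mem_singleton]
  constructor
  · rintro ⟨h1, h2, -⟩; exact sum_one h1 h2
  · rintro rfl; refine ⟨by simp, by simp, by simp [ar]⟩

lemma S_two : S 2 = {[2]} := by
  ext l
  simp only [mem_S, Finset.mem_singleton]
  constructor
  · rintro ⟨h1, h2, h3⟩
    match l with
    | [] => simp at h2
    | a :: r =>
      have ha := h1 a (by simp)
      simp at h2
      have ha2 : a ≤ 2 := by omega
      interval_cases a
      · have hr1 : r.sum = 1 := by omega
        have := sum_one (fun x hx => h1 x (by simp [hx])) hr1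
        subst this
        simp [ar] at h3
      · have hr0 : r.sum = 0 := by omega
        match r with
        | [] => rfl
        | b :: r' =>
          have hb := h1 b (by simp)
          simp at hr0
          omega
  · rintro rfl; refine ⟨by simp, by simp, by simp [ar]⟩

lemma D_one : D 1 = ∅ := by
  ext l
  simp only [D, Finset.mem_filter, Finset.notMem_empty, iff_false]
  rintro ⟨hl, hd⟩
  rw [mem_S] at hl
  match l with
  | [] => simp [hd2] at hd
  | [a] => simp [hd2] at hd
  | a :: b :: r =>
    simp [hd2] at hd
    have := hl.1 b (by simp)
    have hs := hl.2.1
    simp at hs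
    omega

def inc : List ℕ → List ℕ
  | a :: r => (a + 1) :: r
  | [] => []

def dec : List ℕ → List ℕ
  | a :: r => (a - 1) :: r
  | [] => []

set_option maxHeartbeats 1000000 in
lemma card_S_succ (n : ℕ) (hn : 1 ≤ n) :
    (S (n + 1)).card = (D (n + 1)).card + (S n).card := by
  have hsplit := Finset.card_filter_add_card_filter_not
    (s := S (n + 1)) (p := fun l => hd2 l = true)
  have hD : (Finset.filter (fun l => hd2 l = true) (S (n + 1))).card = (D (n + 1)).card := rfl
  have hrest : (Finset.filter (fun l => ¬ hd2 l = true) (S (n + 1))).card = (S n).card := by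
    refine Finset.card_nbij' dec inc ?_ ?_ ?_ ?_
    · intro l hl; simp only [Finset.mem_coe] at hl ⊢
      simp only [Finset.mem_filter, mem_S] at hl
      obtain ⟨⟨h1, h2, h3⟩, hnd⟩ := hl
      match l with
      | [] => simp at h2
      | [a] =>
        have ha := h1 a (by simp)
        simp only [List.sum_cons, List.sum_nil, add_zero] at h2
        rw [mem_S]
        simp only [dec]
        refine ⟨?_, ?_, by simp [ar]⟩
        · intro x hx; simp at hx; omega
        · simp; omega
      | a :: b :: r =>
        rw [ar_cons_cons] at h3
        simp [hd2] at hnd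
        have hb := h1 b (by simp)
        have hab : b + 1 < a := by omega
        rw [mem_S]
        simp only [dec]
        refine ⟨?_, ?_, ?_⟩
        · intro x hx
          simp at hx
          rcases hx with rfl | rfl | hx
          · omega
          · exact hb
          · exact h1 x (by simp [hx])
        · simp at h2 ⊢; omega
        · rw [ar_cons_cons]; exact ⟨by omega, h3.2⟩
    · intro l hl; simp only [Finset.mem_coe] at hl ⊢
      rw [mem_S] at hl
      obtain ⟨h1, h2, h3⟩ := hl
      simp only [Finset.mem_filter, mem_S]
      match l with
      | [] => simp at h2; omega
      | [a] =>
        have ha := h1 a (by simp)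
        simp only [List.sum_cons, List.sum_nil, add_zero] at h2
        refine ⟨⟨?_, ?_, by simp [inc, ar]⟩, by simp [inc, hd2]⟩
        · intro x hx; simp [inc] at hx; omega
        · simp [inc]; omega
      | a :: b :: r =>
        rw [ar_cons_cons] at h3
        simp only [inc]
        have hb := h1 b (by simp)
        refine ⟨⟨?_, ?_, ?_⟩, ?_⟩
        · intro x hx
          simp at hx
          rcases hx with rfl | rfl | hx
          · omega
          · exact hb
          · exact h1 x (by simp [hx])
        · simp at h2 ⊢; omega
        · rw [ar_cons_cons]; exact ⟨by omega, h3.2⟩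
        · simp [hd2]; omega
    · intro l hl; simp only [Finset.mem_coe] at hl ⊢
      simp only [Finset.mem_filter, mem_S] at hl
      match l with
      | [] =>
        have := hl.1.2.1
        simp at this
      | a :: r =>
        have := hl.1.1 a (by simp)
        simp [dec, inc]
        omega
    · intro l hl; simp only [Finset.mem_coe] at hl ⊢
      rw [mem_S] at hl
      match l with
      | [] => simp [inc, dec]
      | a :: r => simp [inc, dec]
  omega

def incP : List ℕ → List ℕ
  | a :: b :: r => (a + 1) :: (b + 1) :: r
  | l => l

def decP : List ℕ → List ℕ
  | a :: b :: r => (a - 1) :: (b - 1) :: r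
  | l => l

set_option maxHeartbeats 1000000 in
lemma card_D (n : ℕ) :
    (D (n + 3)).card = (D (n + 1)).card + (S n).card := by
  have hsplit := Finset.card_filter_add_card_filter_not
    (s := D (n + 3)) (p := fun l => l.head! = 2)
  have h1 : (Finset.filter (fun l => ¬ l.head! = 2) (D (n + 3))).card = (D (n + 1)).card := by
    refine Finset.card_nbij' decP incP ?_ ?_ ?_ ?_
    · intro l hl; simp only [Finset.mem_coe] at hl ⊢
      simp only [Finset.mem_filter, D, mem_S] at hl
      obtain ⟨⟨⟨h1, h2, h3⟩, hd⟩, hh⟩ := hl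
      match l with
      | [] => simp [hd2] at hd
      | [a] => simp [hd2] at hd
      | a :: b :: r =>
        simp [hd2] at hd
        simp at hh
        have hb := h1 b (by simp)
        have hb2 : 2 ≤ b := by omega
        rw [ar_cons_cons] at h3
        simp only [D, Finset.mem_filter, mem_S, decP]
        refine ⟨⟨?_, ?_, ?_⟩, ?_⟩
        · intro x hx
          simp at hx
          rcases hx with rfl | rfl | hx
          · omega
          · omega
          · exact h1 x (by simp [hx])
        · simp at h2 ⊢; omega
        · rw [ar_cons_cons]; exact ⟨by omega, h3.2⟩
        · simp [hd2]; omega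
    · intro l hl; simp only [Finset.mem_coe] at hl ⊢
      simp only [D, Finset.mem_filter, mem_S] at hl
      obtain ⟨⟨h1, h2, h3⟩, hd⟩ := hl
      match l with
      | [] => simp [hd2] at hd
      | [a] => simp [hd2] at hd
      | a :: b :: r =>
        simp [hd2] at hd
        have hb := h1 b (by simp)
        rw [ar_cons_cons] at h3
        simp only [Finset.mem_filter, D, mem_S, incP]
        refine ⟨⟨⟨?_, ?_, ?_⟩, ?_⟩, ?_⟩
        · intro x hx
          simp at hx
          rcases hx with rfl | rfl | hx
          · omega
          · omega
          · exact h1 x (by simp [hx])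
        · simp at h2 ⊢; omega
        · rw [ar_cons_cons]; exact ⟨by omega, h3.2⟩
        · simp [hd2]; omega
        · simp; omega
    · intro l hl; simp only [Finset.mem_coe] at hl ⊢
      simp only [Finset.mem_filter, D, mem_S] at hl
      match l with
      | [] => simp [hd2] at hl
      | [a] => simp [hd2] at hl
      | a :: b :: r =>
        obtain ⟨⟨⟨h1, -, -⟩, hd⟩, -⟩ := hl
        simp [hd2] at hd
        have hb := h1 b (by simp)
        simp [decP, incP]
        omega
    · intro l hl; simp only [Finset.mem_coe] at hl ⊢
      simp only [D, Finset.mem_filter, mem_S] at hl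
      match l with
      | [] => simp [hd2] at hl
      | [a] => simp [hd2] at hl
      | a :: b :: r => simp [incP, decP]
  have h2 : (Finset.filter (fun l => l.head! = 2) (D (n + 3))).card = (S n).card := by
    refine (Finset.card_nbij' (fun r => 2 :: 1 :: r) (fun l => l.drop 2) ?_ ?_ ?_ ?_).symm
    · intro l hl; simp only [Finset.mem_coe] at hl ⊢
      rw [mem_S] at hl
      obtain ⟨h1, h2, h3⟩ := hl
      simp only [Finset.mem_filter, D, mem_S]
      refine ⟨⟨⟨?_, ?_, ?_⟩, by simp [hd2]⟩, by simp⟩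
      · intro x hx
        simp at hx
        rcases hx with rfl | rfl | hx
        · omega
        · omega
        · exact h1 x hx
      · simp [h2]; omega
      · rw [ar_cons_cons]; exact ⟨by omega, h3⟩
    · intro l hl; simp only [Finset.mem_coe] at hl ⊢
      simp only [Finset.mem_filter, D, mem_S] at hl
      obtain ⟨⟨⟨h1, h2, h3⟩, hd⟩, hh⟩ := hl
      match l with
      | [] => simp [hd2] at hd
      | [a] => simp [hd2] at hd
      | a :: b :: r =>
        simp [hd2] at hd
        simp at hh
        rw [ar_cons_cons] at h3
        rw [mem_S]
        refine ⟨fun x hx => h1 x (by simp at hx ⊢; tauto), ?_, h3.2⟩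
        simp at h2 ⊢
        omega
    · intro l hl; simp only [Finset.mem_coe] at hl ⊢
      simp
    · intro l hl; simp only [Finset.mem_coe] at hl ⊢
      simp only [Finset.mem_filter, D, mem_S] at hl
      obtain ⟨⟨⟨h1, h2, h3⟩, hd⟩, hh⟩ := hl
      match l with
      | [] => simp [hd2] at hd
      | [a] => simp [hd2] at hd
      | a :: b :: r =>
        simp [hd2] at hd
        simp at hh
        simp
        omega
  omega

lemma card_fib : ∀ n : ℕ, (S (n + 1)).card = Nat.fib (n + 1) := by
  have key : ∀ n : ℕ, (S (n + 3)).card = (S (n + 2)).card + (S (n + 1)).card := by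
    intro n
    match n with
    | 0 =>
      have a1 : (S 3).card = (D 3).card + (S 2).card := card_S_succ 2 (by norm_num)
      have a2 : (D 3).card = (D 1).card + (S 0).card := card_D 0
      rw [D_one, S_zero] at a2
      simp at a2
      have a3 : (S 1).card = 1 := by rw [S_one]; simp
      show (S 3).card = (S 2).card + (S 1).card
      omega
    | m + 1 =>
      have a1 : (S (m + 4)).card = (D (m + 4)).card + (S (m + 3)).card :=
        card_S_succ (m + 3) (by omega)
      have a2 : (D (m + 4)).card = (D (m + 2)).card + (S (m + 1)).card := card_D (m + 1)
      have a3 : (S (m + 2)).card = (D (m + 2)).card + (S (m + 1)).card :=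
        card_S_succ (m + 1) (by omega)
      show (S (m + 4)).card = (S (m + 3)).card + (S (m + 2)).card
      omega
  intro n
  induction n using Nat.strong_induction_on with
  | _ n ih =>
    match n with
    | 0 => rw [S_one]; simp
    | 1 => rw [S_two]; simp
    | m + 2 =>
      have h : (S (m + 3)).card = (S (m + 2)).card + (S (m + 1)).card := key m
      have i1 : (S (m + 2)).card = Nat.fib (m + 2) := ih (m + 1) (by omega)
      have i2 : (S (m + 1)).card = Nat.fib (m + 1) := ih m (by omega)
      have hf : Nat.fib (m + 3) = Nat.fib (m + 1) + Nat.fib (m + 2) :=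
        Nat.fib_add_two (n := m + 1)
      show (S (m + 3)).card = Nat.fib (m + 3)
      omega


/-- `a_{s,t}(n)`: the number of scaled Arndt compositions of `n`. -/
noncomputable def arndtCount (s t n : ℕ) : ℕ :=
  Nat.card {l : List ℕ // IsComposition n l ∧ ArndtCond s t l}

/-- Number of compositions of `n` with all parts in the set `A`. -/
noncomputable def compCount (A : Set ℕ) (n : ℕ) : ℕ :=
  Nat.card {l : List ℕ // IsComposition n l ∧ ∀ x ∈ l, x ∈ A}

theorem arndt_eq_fib (n : ℕ) (hn : 0 < n) :
    arndtCount 1 1 n = Nat.fib n := by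
  obtain ⟨m, rfl⟩ : ∃ m, n = m + 1 := ⟨n - 1, by omega⟩
  rw [← card_fib m, arndtCount]
  have e : {l : List ℕ // IsComposition (m+1) l ∧ ArndtCond 1 1 l} ≃ {l // l ∈ S (m+1)} :=
    Equiv.subtypeEquivRight (fun l => by
      rw [mem_S, arndt_iff, IsComposition, and_assoc])
  rw [Nat.card_congr e, Nat.card_eq_finsetCard]
end

section
/- Let s, t be positive integers and let c ≥ 0, q ≥ 0, and 1 ≤ r ≤ s−1 be integers. Set a' = c + q·t + ⌈(r·t+1)/s⌉ and b' = q·s + r. Then a' and b' are positive, s·a' > t·b', and a' + b' = c + q·(s+t) + r + ⌈(r·t+1)/s⌉. -/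
theorem inverse_pair_valid (s t c q r : ℕ) (hs : 0 < s) (ht : 0 < t)
    (hr1 : 1 ≤ r) (hr2 : r ≤ s - 1)
    (a' b' : ℕ) (ha' : a' = c + q * t + (r * t + 1) ⌈/⌉ s) (hb' : b' = q * s + r) :
    0 < a' ∧ 0 < b' ∧ t * b' < s * a' ∧
      a' + b' = c + q * (s + t) + r + (r * t + 1) ⌈/⌉ s := by
  have hle : r * t + 1 ≤ s * ((r * t + 1) ⌈/⌉ s) := le_smul_ceilDiv hs
  subst ha' hb'
  refine ⟨?_, by positivity, ?_, by ring⟩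
  · have h0 : (r * t + 1) ⌈/⌉ s ≠ 0 := by
      intro h0; rw [h0, Nat.mul_zero] at hle; omega
    omega
  · calc t * (q * s + r) = q * t * s + r * t := by ring
      _ < s * (c + q * t) + s * ((r * t + 1) ⌈/⌉ s) := by nlinarith
      _ = s * (c + q * t + (r * t + 1) ⌈/⌉ s) := by ring
end

section
/- For relatively prime positive integers s and t, the map r ↦ (r + ⌈(r·t+1)/s⌉) mod (s+t) is injective on {0, 1, ..., s−1}, and its values are distinct nonzero residues modulo s+t. -/
lemma ceilDiv_eq_div_succ (s r t : ℕ) (hs : 0 < s) :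
    (r * t + 1) ⌈/⌉ s = r * t / s + 1 := by
  rw [Nat.ceilDiv_eq_add_pred_div]
  have h : r * t + 1 + s - 1 = r * t + s := by omega
  rw [h, Nat.add_div_right _ hs]

lemma key_eq (s r t : ℕ) (hs : 0 < s) :
    s * (r + r * t / s + 1) = r * (s + t) + (s - r * t % s) := by
  have hd := Nat.div_add_mod (r * t) s
  have hm : r * t % s < s := Nat.mod_lt _ hs
  zify [hm.le] at hd ⊢
  linear_combination hd

lemma smul_mod (s t r : ℕ) (hs : 0 < s) (ht : 0 < t) (hr : r < s) :
    (s * ((r + (r * t + 1) ⌈/⌉ s) % (s + t))) % (s + t) = s - r * t % s := by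
  have hmod := (Nat.mod_modEq (r + (r * t + 1) ⌈/⌉ s) (s + t)).mul_left s
  rw [Nat.ModEq] at hmod
  rw [hmod, ceilDiv_eq_div_succ s r t hs]
  have hkey := key_eq s r t hs
  have hm : r * t % s < s := Nat.mod_lt _ hs
  rw [← Nat.add_assoc, hkey, Nat.add_comm, Nat.add_mul_mod_self_right,
    Nat.mod_eq_of_lt (by omega)]

theorem residues_injective_nonzero (s t : ℕ) (hs : 0 < s) (ht : 0 < t)
    (hco : Nat.Coprime s t) :
    Set.InjOn (fun r : ℕ => (r + (r * t + 1) ⌈/⌉ s) % (s + t)) (Set.Iio s) ∧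
    ∀ r < s, (r + (r * t + 1) ⌈/⌉ s) % (s + t) ≠ 0 := by
  constructor
  · intro r1 hr1 r2 hr2 heq
    simp only [Set.mem_Iio] at hr1 hr2
    have h1 := smul_mod s t r1 hs ht hr1
    have h2 := smul_mod s t r2 hs ht hr2
    simp only at heq
    rw [heq] at h1
    have hm1 : r1 * t % s < s := Nat.mod_lt _ hs
    have hm2 : r2 * t % s < s := Nat.mod_lt _ hs
    have hρ : r1 * t % s = r2 * t % s := by omega
    have : r1 ≡ r2 [MOD s] := by
      exact Nat.ModEq.cancel_right_of_coprime hco hρ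
    have := this.eq_of_lt_of_lt hr1 hr2
    exact this
  · intro r hr h0
    have h1 := smul_mod s t r hs ht hr
    rw [h0] at h1
    simp at h1
    have hm : r * t % s < s := Nat.mod_lt _ hs
    omega
end

section
/- For relatively prime positive integers s and t, the number a_{s,t}(n) of compositions of n satisfying s·c_{2i-1} > t·c_{2i} for all valid i equals the number of compositions of n all of whose parts are congruent to r + ⌈(r·t+1)/s⌉ modulo (s+t) for some r with 0 ≤ r ≤ s−1. -/
open Finset

noncomputable def compFinset (n : ℕ) : Finset (List ℕ) :=
  (Finset.univ : Finset (Composition n)).image Composition.blocks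

lemma mem_compFinset {n : ℕ} {l : List ℕ} : l ∈ compFinset n ↔ IsComposition n l := by
  simp only [compFinset, Finset.mem_image, Finset.mem_univ, true_and]
  constructor
  · rintro ⟨c, rfl⟩
    exact ⟨fun x hx => c.blocks_pos hx, c.blocks_sum⟩
  · rintro ⟨h1, h2⟩
    exact ⟨⟨l, fun {x} hx => h1 x hx, h2⟩, rfl⟩

lemma card_eq_filter (n : ℕ) (P : List ℕ → Prop) [DecidablePred P] :
    Nat.card {l : List ℕ // IsComposition n l ∧ P l} = ((compFinset n).filter P).card := by
  have h1 : Nat.card {l : List ℕ // IsComposition n l ∧ P l}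
      = Nat.card {l : List ℕ | IsComposition n l ∧ P l} := rfl
  have h2 : {l : List ℕ | IsComposition n l ∧ P l} = ↑((compFinset n).filter P) := by
    ext l; simp [mem_compFinset, and_comm]
  rw [h1, Nat.card_coe_set_eq, h2, Set.ncard_coe_finset]

lemma isComposition_zero {l : List ℕ} : IsComposition 0 l ↔ l = [] := by
  constructor
  · rintro ⟨h1, h2⟩
    cases l with
    | nil => rfl
    | cons a l =>
      simp only [List.sum_cons] at h2
      have := h1 a (by simp)
      omega
  · rintro rfl; exact ⟨by simp, rfl⟩

lemma arndtCond_nil (s t : ℕ) : ArndtCond s t [] := by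
  intro i hi; simp at hi

lemma arndtCond_single (s t a : ℕ) : ArndtCond s t [a] := by
  intro i hi; simp at hi

lemma arndtCond_cons_cons {s t a b : ℕ} {l : List ℕ} :
    ArndtCond s t (a :: b :: l) ↔ t * b < s * a ∧ ArndtCond s t l := by
  constructor
  · intro h
    refine ⟨by simpa using h 0 (by simp), ?_⟩
    intro i hi
    have := h (i + 1) (by simp; omega)
    have e1 : (a :: b :: l)[2 * (i + 1) + 1]! = l[2 * i + 1]! := by
      have : 2 * (i + 1) + 1 = (2 * i + 1) + 2 := by ring
      rw [this]; simp [List.getElem!_cons_succ]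
    have e2 : (a :: b :: l)[2 * (i + 1)]! = l[2 * i]! := by
      have : 2 * (i + 1) = (2 * i) + 2 := by ring
      rw [this]; simp [List.getElem!_cons_succ]
    rwa [e1, e2] at this
  · rintro ⟨hab, h⟩ i hi
    match i with
    | 0 => simpa using hab
    | (i + 1) =>
      simp only [List.length_cons] at hi
      have hi' : 2 * i + 1 < l.length := by omega
      have := h i hi'
      have e1 : (a :: b :: l)[2 * (i + 1) + 1]! = l[2 * i + 1]! := by
        have : 2 * (i + 1) + 1 = (2 * i + 1) + 2 := by ring
        rw [this]; simp [List.getElem!_cons_succ]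
      have e2 : (a :: b :: l)[2 * (i + 1)]! = l[2 * i]! := by
        have : 2 * (i + 1) = (2 * i) + 2 := by ring
        rw [this]; simp [List.getElem!_cons_succ]
      rw [e1, e2]; exact this

lemma compFinset_zero : compFinset 0 = {[]} := by
  ext l; simp [mem_compFinset, isComposition_zero]

lemma compCount_zero (A : Set ℕ) : compCount A 0 = 1 := by
  classical
  rw [compCount, card_eq_filter 0 (fun l => ∀ x ∈ l, x ∈ A), compFinset_zero,
    Finset.filter_singleton, if_pos (by intro x hx; simp at hx), Finset.card_singleton]

lemma arndtCount_zero (s t : ℕ) : arndtCount s t 0 = 1 := by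
  classical
  rw [arndtCount, card_eq_filter 0 (ArndtCond s t), compFinset_zero,
    Finset.filter_singleton, if_pos (arndtCond_nil s t), Finset.card_singleton]

lemma compCount_rec (A : Set ℕ) [DecidablePred (· ∈ A)] {n : ℕ} (hn : 0 < n) :
    compCount A n = ∑ d ∈ Finset.Icc 1 n, if d ∈ A then compCount A (n - d) else 0 := by
  classical
  rw [compCount, card_eq_filter n (fun l => ∀ x ∈ l, x ∈ A)]
  have hmap : ∀ l ∈ (compFinset n).filter (fun l => ∀ x ∈ l, x ∈ A),
      l.head! ∈ Finset.Icc 1 n := by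
    intro l hl
    rw [Finset.mem_filter, mem_compFinset] at hl
    obtain ⟨⟨h1, h2⟩, _⟩ := hl
    cases l with
    | nil => simp at h2; omega
    | cons a l =>
      simp only [List.head!_cons, Finset.mem_Icc]
      have := h1 a (by simp)
      simp only [List.sum_cons] at h2
      omega
  rw [Finset.card_eq_sum_card_fiberwise hmap]
  refine Finset.sum_congr rfl ?_
  intro d hd
  rw [Finset.mem_Icc] at hd
  by_cases hdA : d ∈ A
  · rw [if_pos hdA, compCount, card_eq_filter (n - d) (fun l => ∀ x ∈ l, x ∈ A)]
    refine Finset.card_nbij' (fun l => l.tail) (fun l => d :: l) ?_ ?_ ?_ ?_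
    · intro l hl
      simp only [Finset.mem_coe, Finset.mem_filter, mem_compFinset] at hl ⊢
      obtain ⟨⟨⟨h1, h2⟩, hA⟩, hh⟩ := hl
      cases l with
      | nil => simp at h2; omega
      | cons a l =>
        simp only [List.head!_cons] at hh
        subst hh
        simp only [List.sum_cons] at h2
        simp only [List.tail_cons]
        exact ⟨⟨fun x hx => h1 x (by simp [hx]), by omega⟩, fun x hx => hA x (by simp [hx])⟩
    · intro l hl
      simp only [Finset.mem_coe, Finset.mem_filter, mem_compFinset] at hl ⊢
      obtain ⟨⟨h1, h2⟩, hA⟩ := hl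
      refine ⟨⟨⟨?_, ?_⟩, ?_⟩, by simp⟩
      · intro x hx
        rcases List.mem_cons.1 hx with rfl | hx
        · omega
        · exact h1 x hx
      · simp only [List.sum_cons]; omega
      · intro x hx
        rcases List.mem_cons.1 hx with rfl | hx
        · exact hdA
        · exact hA x hx
    · intro l hl
      simp only [Finset.mem_coe, Finset.mem_filter, mem_compFinset] at hl
      obtain ⟨⟨⟨h1, h2⟩, _⟩, hh⟩ := hl
      cases l with
      | nil => simp at h2; omega
      | cons a l => simp only [List.head!_cons] at hh; subst hh; simp
    · intro l _; simp
  · rw [if_neg hdA]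
    rw [Finset.card_eq_zero]
    ext l
    simp only [Finset.mem_filter, mem_compFinset, Finset.notMem_empty, iff_false]
    rintro ⟨⟨⟨h1, h2⟩, hA⟩, hh⟩
    apply hdA
    cases l with
    | nil => simp at h2; omega
    | cons a l =>
      simp only [List.head!_cons] at hh
      subst hh
      exact hA _ (by simp)

def pcount (s t m : ℕ) : ℕ := ((Finset.Ico 1 m).filter (fun a => t * (m - a) < s * a)).card

lemma eq_cons_cons_of_two_le {l : List ℕ} (h : 2 ≤ l.length) :
    l = l[0]! :: l[1]! :: l.drop 2 := by
  match l with
  | a :: b :: r => simp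

set_option maxHeartbeats 2000000 in
lemma arndt_rec (s t : ℕ) {n : ℕ} (hn : 0 < n) :
    arndtCount s t n = 1 + ∑ m ∈ Finset.Icc 2 n, pcount s t m * arndtCount s t (n - m) := by
  classical
  rw [arndtCount, card_eq_filter n (ArndtCond s t)]
  set S := (compFinset n).filter (ArndtCond s t) with hS
  have hsplit : (S.filter (fun l => l.length = 1)).card
      + (S.filter (fun l => ¬ l.length = 1)).card = S.card := by
    simpa using Finset.card_filter_add_card_filter_not
      (s := S) (p := fun l => l.length = 1)
  -- card of the singleton part
  have hlen : ∀ l ∈ S, 1 ≤ l.length := by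
    intro l hl
    rw [hS, Finset.mem_filter, mem_compFinset] at hl
    obtain ⟨⟨h1, h2⟩, _⟩ := hl
    cases l with
    | nil => simp at h2; omega
    | cons a r => simp
  have h1card : (S.filter (fun l => l.length = 1)).card = 1 := by
    have : S.filter (fun l => l.length = 1) = {[n]} := by
      ext l
      simp only [Finset.mem_filter, Finset.mem_singleton, hS, mem_compFinset]
      constructor
      · rintro ⟨⟨⟨hp, hsum⟩, _⟩, hlen1⟩
        match l with
        | [a] => simp at hsum; subst hsum; rfl
      · rintro rfl
        exact ⟨⟨⟨by intro x hx; simp at hx; omega, by simp⟩, arndtCond_single s t n⟩, rfl⟩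
    rw [this, Finset.card_singleton]
  -- the pair part
  set T : Finset (ℕ × ℕ) := (Finset.Icc 1 n ×ˢ Finset.Icc 1 n).filter
    (fun ab => ab.1 + ab.2 ≤ n ∧ t * ab.2 < s * ab.1) with hT
  have h2card : (S.filter (fun l => ¬ l.length = 1)).card
      = ∑ ab ∈ T, ((compFinset (n - ab.1 - ab.2)).filter (ArndtCond s t)).card := by
    have hmap : ∀ l ∈ S.filter (fun l => ¬ l.length = 1),
        (l[0]!, l[1]!) ∈ T := by
      intro l hl
      rw [Finset.mem_filter] at hl
      obtain ⟨hlS, hl1⟩ := hl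
      have h2le : 2 ≤ l.length := by have := hlen l hlS; omega
      rw [hS, Finset.mem_filter, mem_compFinset] at hlS
      obtain ⟨⟨hp, hsum⟩, hA⟩ := hlS
      obtain ⟨a, b, r, hl⟩ : ∃ a b r, l = a :: b :: r := by
        match l with | a :: b :: r => exact ⟨a, b, r, rfl⟩
      subst hl
      have ha : 0 < a := hp a (by simp)
      have hb : 0 < b := hp b (by simp)
      have hab : a + b ≤ n := by simp only [List.sum_cons] at hsum; omega
      have harndt := hA 0 (by simp)
      simp only [List.getElem!_cons_zero, List.getElem!_cons_succ] at harndt ⊢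
      rw [hT, Finset.mem_filter, Finset.mem_product]
      refine ⟨⟨Finset.mem_Icc.2 ⟨ha, by omega⟩, Finset.mem_Icc.2 ⟨hb, by omega⟩⟩, hab, ?_⟩
      simpa using harndt
    rw [Finset.card_eq_sum_card_fiberwise hmap]
    refine Finset.sum_congr rfl ?_
    intro ab hab
    rw [hT, Finset.mem_filter, Finset.mem_product, Finset.mem_Icc, Finset.mem_Icc] at hab
    obtain ⟨⟨⟨ha1, _⟩, ⟨hb1, _⟩⟩, habn, habst⟩ := hab
    refine Finset.card_nbij' (fun l => l.drop 2) (fun l => ab.1 :: ab.2 :: l) ?_ ?_ ?_ ?_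
    · intro l hl
      simp only [Finset.mem_coe, Finset.mem_filter] at hl
      obtain ⟨⟨hlS, hl1⟩, hfib⟩ := hl
      have h2le : 2 ≤ l.length := by have := hlen l hlS; omega
      rw [hS, Finset.mem_filter, mem_compFinset] at hlS
      obtain ⟨⟨hp, hsum⟩, hA⟩ := hlS
      obtain ⟨a, b, r, hl⟩ : ∃ a b r, l = a :: b :: r := by
        match l with | a :: b :: r => exact ⟨a, b, r, rfl⟩
      subst hl
      simp only [List.getElem!_cons_zero, List.getElem!_cons_succ, Prod.ext_iff] at hfib
      obtain ⟨hfa, hfb⟩ := hfib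
      simp only [List.sum_cons] at hsum
      rw [Finset.mem_coe, Finset.mem_filter, mem_compFinset]
      rw [arndtCond_cons_cons] at hA
      refine ⟨⟨fun x hx => hp x (by simp at hx ⊢; tauto), ?_⟩, hA.2⟩
      simp only [List.drop_succ_cons, List.drop_zero]
      omega
    · intro l hl
      rw [Finset.mem_coe, Finset.mem_filter, mem_compFinset] at hl
      obtain ⟨⟨hp, hsum⟩, hA⟩ := hl
      simp only [Finset.mem_coe, Finset.mem_filter, hS, mem_compFinset]
      refine ⟨⟨⟨⟨?_, ?_⟩, ?_⟩, by simp⟩, by simp [List.getElem!_cons_zero, List.getElem!_cons_succ]⟩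
      · intro x hx
        simp only [List.mem_cons] at hx
        rcases hx with rfl | rfl | hx
        · omega
        · omega
        · exact hp x hx
      · simp only [List.sum_cons]; omega
      · rw [arndtCond_cons_cons]; exact ⟨habst, hA⟩
    · intro l hl
      simp only [Finset.mem_coe, Finset.mem_filter] at hl
      obtain ⟨⟨hlS, hl1⟩, hfib⟩ := hl
      have h2le : 2 ≤ l.length := by have := hlen l hlS; omega
      conv_rhs => rw [eq_cons_cons_of_two_le h2le]
      rw [← hfib]
    · intro l _; simp
  -- reorganize the sum over pairs by their total
  have h3 : ∑ ab ∈ T, ((compFinset (n - ab.1 - ab.2)).filter (ArndtCond s t)).card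
      = ∑ m ∈ Finset.Icc 2 n, pcount s t m * arndtCount s t (n - m) := by
    have hmap2 : ∀ ab ∈ T, ab.1 + ab.2 ∈ Finset.Icc 2 n := by
      intro ab hab
      rw [hT, Finset.mem_filter, Finset.mem_product, Finset.mem_Icc, Finset.mem_Icc] at hab
      rw [Finset.mem_Icc]
      omega
    rw [← Finset.sum_fiberwise_of_maps_to hmap2]
    refine Finset.sum_congr rfl ?_
    intro m hm
    rw [Finset.mem_Icc] at hm
    have hinner : ∀ ab ∈ T.filter (fun ab => ab.1 + ab.2 = m),
        ((compFinset (n - ab.1 - ab.2)).filter (ArndtCond s t)).card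
          = arndtCount s t (n - m) := by
      intro ab hab
      rw [Finset.mem_filter] at hab
      rw [arndtCount, card_eq_filter (n - m) (ArndtCond s t)]
      rw [show n - ab.1 - ab.2 = n - m by omega]
    rw [Finset.sum_congr rfl hinner, Finset.sum_const, smul_eq_mul]
    congr 1
    rw [pcount]
    refine Finset.card_nbij' (fun ab => ab.1) (fun a => (a, m - a)) ?_ ?_ ?_ ?_
    · intro ab hab
      simp only [Finset.mem_coe, Finset.mem_filter, hT, Finset.mem_product, Finset.mem_Icc] at hab
      simp only [Finset.mem_coe, Finset.mem_filter, Finset.mem_Ico]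
      obtain ⟨⟨⟨⟨ha1, han⟩, ⟨hb1, hbn⟩⟩, habn, habst⟩, habm⟩ := hab
      refine ⟨⟨ha1, by omega⟩, ?_⟩
      rw [show m - ab.1 = ab.2 by omega]
      exact habst
    · intro a ha
      simp only [Finset.mem_coe, Finset.mem_filter, Finset.mem_Ico] at ha
      obtain ⟨⟨ha1, ham⟩, hcond⟩ := ha
      simp only [Finset.mem_coe, Finset.mem_filter, hT, Finset.mem_product, Finset.mem_Icc]
      refine ⟨⟨⟨⟨ha1, by omega⟩, ⟨by omega, by omega⟩⟩, by omega, hcond⟩, by omega⟩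
    · intro ab hab
      simp only [Finset.mem_coe, Finset.mem_filter] at hab
      have hb1 : 1 ≤ ab.2 := by
        have h := hab.1
        rw [hT, Finset.mem_filter, Finset.mem_product, Finset.mem_Icc, Finset.mem_Icc] at h
        exact h.1.2.1
      have hsum := hab.2
      show (ab.1, m - ab.1) = ab
      have h2 : m - ab.1 = ab.2 := by omega
      rw [h2]
    · intro a _; rfl
  omega

lemma pcount_eq {s t : ℕ} (hs : 0 < s) (ht : 0 < t) {m : ℕ} (hm : 1 ≤ m) :
    pcount s t m = m - 1 - t * m / (s + t) := by
  have hq : 0 < s + t := by omega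
  have hset : (Finset.Ico 1 m).filter (fun a => t * (m - a) < s * a)
      = Finset.Ico (t * m / (s + t) + 1) m := by
    ext a
    simp only [Finset.mem_filter, Finset.mem_Ico]
    constructor
    · rintro ⟨⟨h1, h2⟩, h3⟩
      rw [Nat.mul_sub] at h3
      have e2 : t * a ≤ t * m := Nat.mul_le_mul_left t (by omega)
      have e4 : a * (s + t) = s * a + t * a := by ring
      have h5 : t * m / (s + t) < a := (Nat.div_lt_iff_lt_mul hq).2 (by omega)
      exact ⟨by omega, h2⟩
    · rintro ⟨h1, h2⟩
      have h3 : t * m < a * (s + t) := (Nat.div_lt_iff_lt_mul hq).1 (by omega)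
      have e2 : t * a ≤ t * m := Nat.mul_le_mul_left t (by omega)
      have e4 : a * (s + t) = s * a + t * a := by ring
      refine ⟨⟨lt_of_lt_of_le (Nat.succ_pos _) h1, h2⟩, ?_⟩
      rw [Nat.mul_sub]
      omega
  rw [pcount, hset, Nat.card_Ico]
  omega

lemma tmul_div_lt {s t m : ℕ} (hs : 0 < s) (hm : 1 ≤ m) : t * m / (s + t) < m := by
  have hq : 0 < s + t := by omega
  refine (Nat.div_lt_iff_lt_mul hq).2 ?_
  nlinarith

lemma pcount_succ {s t : ℕ} (hs : 0 < s) (ht : 0 < t) {m : ℕ} (hm : 2 ≤ m) :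
    pcount s t m = pcount s t (m - 1)
      + (if t ≤ t * m % (s + t) then 1 else 0) := by
  have hq : 0 < s + t := by omega
  rw [pcount_eq hs ht (by omega : 1 ≤ m), pcount_eq hs ht (by omega : 1 ≤ m - 1)]
  have e0 : t * m = t * (m - 1) + t := by
    have : t * (m - 1) = t * m - t * 1 := Nat.mul_sub t m 1
    have e2 : t * 1 ≤ t * m := Nat.mul_le_mul_left t (by omega)
    omega
  have hdiv : t * m / (s + t) = t * (m - 1) / (s + t) + t / (s + t)
      + if s + t ≤ t * (m - 1) % (s + t) + t % (s + t) then 1 else 0 := by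
    rw [e0]; exact Nat.add_div hq
  have ht0 : t / (s + t) = 0 := Nat.div_eq_of_lt (by omega)
  have htm : t % (s + t) = t := Nat.mod_eq_of_lt (by omega)
  have hmod : t * m % (s + t) = (t * (m - 1) % (s + t) + t) % (s + t) := by
    rw [e0, Nat.add_mod, htm]
  have hr : t * (m - 1) % (s + t) < s + t := Nat.mod_lt _ hq
  have hj : t * (m - 1) / (s + t) < m - 1 := tmul_div_lt hs (by omega)
  rw [ht0, htm] at hdiv
  by_cases hc : s + t ≤ t * (m - 1) % (s + t) + t
  · rw [if_pos hc] at hdiv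
    have hmod2 : t * m % (s + t) = t * (m - 1) % (s + t) + t - (s + t) := by
      rw [hmod, Nat.mod_eq_sub_mod hc, Nat.mod_eq_of_lt (by omega)]
    have hχ : ¬ (t ≤ t * m % (s + t)) := by omega
    rw [if_neg hχ]
    omega
  · rw [if_neg hc] at hdiv
    have hmod2 : t * m % (s + t) = t * (m - 1) % (s + t) + t := by
      rw [hmod, Nat.mod_eq_of_lt (by omega)]
    have hχ : t ≤ t * m % (s + t) := by omega
    rw [if_pos hχ]
    omega

lemma pcount_one (s t : ℕ) : pcount s t 1 = 0 := by
  simp [pcount]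

lemma smul_key {s t : ℕ} (hs : 0 < s) (r : ℕ) :
    s * (r + (r * t / s + 1)) = r * (s + t) + (s - r * t % s) := by
  have h1 : s * (r * t / s) + r * t % s = r * t := Nat.div_add_mod (r * t) s
  have h2 : r * t % s < s := Nat.mod_lt _ hs
  have e1 : s * (r + (r * t / s + 1)) = s * r + s * (r * t / s) + s := by ring
  have e2 : r * (s + t) = s * r + r * t := by ring
  omega

lemma sum_mod_split {x q : ℕ} (hq : 0 < q) (h : (x + q * (x / q) * 0) = x) : True := trivial

lemma mod_pair_eq {a b q : ℕ} (hq : 0 < q) (h : (a + b) % q = 0) (ha : a < q) (hb : b < q)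
    (hpos : 0 < a) : b = q - a := by
  rcases Nat.lt_or_ge (a + b) q with h1 | h1
  · rw [Nat.mod_eq_of_lt h1] at h; omega
  · rw [Nat.mod_eq_sub_mod h1, Nat.mod_eq_of_lt (by omega)] at h; omega

lemma mem_S_iff {s t : ℕ} (hs : 0 < s) (ht : 0 < t) (hco : Nat.Coprime s t) (x : ℕ) :
    (∃ r < s, x % (s + t) = (r + (r * t + 1) ⌈/⌉ s) % (s + t)) ↔ t ≤ t * x % (s + t) := by
  have hq : 0 < s + t := by omega
  have hceil : ∀ r : ℕ, (r * t + 1) ⌈/⌉ s = r * t / s + 1 := by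
    intro r
    rw [Nat.ceilDiv_eq_add_pred_div]
    rw [show r * t + 1 + s - 1 = r * t + s by omega, Nat.add_div_right _ hs]
  -- mod of s * (r + k)
  have hsmod : ∀ r : ℕ, s * (r + (r * t / s + 1)) % (s + t) = s - r * t % s := by
    intro r
    rw [smul_key hs r, Nat.add_comm, Nat.add_mul_mod_self_right]
    exact Nat.mod_eq_of_lt (by have := Nat.mod_lt (r * t) hs; omega)
  have htmod : ∀ r : ℕ, t * (r + (r * t / s + 1)) % (s + t)
      = (s + t) - (s - r * t % s) := by
    intro r
    set k := r + (r * t / s + 1)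
    have h0 : (s * k + t * k) % (s + t) = 0 := by
      rw [show s * k + t * k = k * (s + t) by ring, Nat.mul_mod_left]
    rw [Nat.add_mod, hsmod r] at h0
    have hb : t * k % (s + t) < s + t := Nat.mod_lt _ hq
    have hrs : r * t % s < s := Nat.mod_lt _ hs
    exact mod_pair_eq hq h0 (by omega) hb (by omega)
  constructor
  · rintro ⟨r, hr, hx⟩
    rw [hceil r] at hx
    have hxx : t * x % (s + t) = t * (r + (r * t / s + 1)) % (s + t) := by
      conv_lhs => rw [Nat.mul_mod, hx, ← Nat.mul_mod]
    rw [hxx, htmod r]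
    have hrs : r * t % s < s := Nat.mod_lt _ hs
    omega
  · intro hv
    -- s * x % (s + t) = (s + t) - t * x % (s + t) ∈ [1, s]
    have h0 : (s * x + t * x) % (s + t) = 0 := by
      rw [show s * x + t * x = x * (s + t) by ring, Nat.mul_mod_left]
    rw [Nat.add_mod] at h0
    have hsx : s * x % (s + t) < s + t := Nat.mod_lt _ hq
    have htx : t * x % (s + t) < s + t := Nat.mod_lt _ hq
    have hu : t * x % (s + t) = (s + t) - s * x % (s + t) := by
      rcases Nat.eq_zero_or_pos (s * x % (s + t)) with h | h
      · rw [h, Nat.zero_add, Nat.mod_eq_of_lt htx] at h0; omega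
      · exact mod_pair_eq hq h0 hsx htx h
    set u := s * x % (s + t) with hudef
    have hu1 : 1 ≤ u ∧ u ≤ s := by omega
    -- find r < s with r * t % s = s - u
    obtain ⟨r, hr, hrt⟩ : ∃ r < s, r * t % s = s - u := by
      rcases Nat.lt_or_ge 1 s with hs1 | hs1
      · obtain ⟨b, -, hb⟩ := Nat.exists_mul_mod_eq_one_of_coprime hco.symm hs1
        refine ⟨(s - u) * b % s, Nat.mod_lt _ hs, ?_⟩
        rw [Nat.mod_mul_mod, show (s - u) * b * t = (s - u) * (t * b) by ring,
          Nat.mul_mod, hb, Nat.mul_one]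
        have hlt : s - u < s := by omega
        rw [Nat.mod_eq_of_lt hlt, Nat.mod_eq_of_lt hlt]
      · exact ⟨0, by omega, by simp; omega⟩
    refine ⟨r, hr, ?_⟩
    rw [hceil r]
    have hg : Nat.gcd (s + t) s = 1 := by
      have h1 : Nat.gcd (s + t) s = Nat.gcd t s := by
        rw [Nat.add_comm, Nat.gcd_add_self_left]
      rw [h1]; exact hco.symm
    refine Nat.ModEq.cancel_left_of_coprime hg ?_
    show s * x % (s + t) = s * (r + (r * t / s + 1)) % (s + t)
    rw [hsmod r, hrt]
    omega

theorem arndt_eq_congruence_count (s t n : ℕ) (hs : 0 < s) (ht : 0 < t)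
    (hco : Nat.Coprime s t) :
    arndtCount s t n =
      compCount {x : ℕ | ∃ r < s, x % (s + t) = (r + (r * t + 1) ⌈/⌉ s) % (s + t)} n := by
  classical
  set A : Set ℕ := {x : ℕ | ∃ r < s, x % (s + t) = (r + (r * t + 1) ⌈/⌉ s) % (s + t)} with hA
  haveI : DecidablePred (· ∈ A) := Classical.decPred _
  induction n using Nat.strong_induction_on with
  | _ n ih =>
  rcases Nat.eq_zero_or_pos n with rfl | hn
  · rw [arndtCount_zero, compCount_zero]
  rw [arndt_rec s t hn, compCount_rec A hn]
  have hq : 0 < s + t := by omega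
  -- rewrite the RHS sum
  have hrhs : ∀ d ∈ Finset.Icc 1 n,
      (if d ∈ A then compCount A (n - d) else 0)
        = (if t ≤ t * d % (s + t) then 1 else 0) * arndtCount s t (n - d) := by
    intro d hd
    rw [Finset.mem_Icc] at hd
    rw [← ih (n - d) (by omega)]
    by_cases hc : t ≤ t * d % (s + t)
    · rw [if_pos (show d ∈ A from (mem_S_iff hs ht hco d).mpr hc), if_pos hc, one_mul]
    · rw [if_neg (show ¬ d ∈ A from fun h => hc ((mem_S_iff hs ht hco d).mp h)),
        if_neg hc, zero_mul]
  rw [Finset.sum_congr rfl hrhs]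
  -- split off d = 1
  have hins : Finset.Icc 1 n = insert 1 (Finset.Icc 2 n) := by
    ext a; simp only [Finset.mem_Icc, Finset.mem_insert]; omega
  rw [hins, Finset.sum_insert (by simp)]
  have hchi1 : (if t ≤ t * 1 % (s + t) then 1 else 0) = 1 := by
    rw [mul_one, Nat.mod_eq_of_lt (by omega), if_pos le_rfl]
  rw [hchi1, one_mul]
  rcases Nat.lt_or_ge n 2 with hn2 | hn2
  · -- n = 1
    have h1 : n = 1 := by omega
    subst h1
    rw [show Finset.Icc 2 1 = ∅ by apply Finset.Icc_eq_empty; omega]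
    simp [arndtCount_zero]
  · -- n ≥ 2
    have hstep : ∀ m ∈ Finset.Icc 2 n,
        pcount s t m * arndtCount s t (n - m)
          = pcount s t (m - 1) * arndtCount s t (n - m)
            + (if t ≤ t * m % (s + t) then 1 else 0) * arndtCount s t (n - m) := by
      intro m hm
      rw [Finset.mem_Icc] at hm
      rw [pcount_succ hs ht hm.1, add_mul]
    rw [Finset.sum_congr rfl hstep, Finset.sum_add_distrib]
    have hre : ∑ m ∈ Finset.Icc 2 n, pcount s t (m - 1) * arndtCount s t (n - m)
        = ∑ j ∈ Finset.Icc 1 (n - 1), pcount s t j * arndtCount s t ((n - 1) - j) := by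
      refine Finset.sum_nbij' (fun m => m - 1) (fun j => j + 1) ?_ ?_ ?_ ?_ ?_
      · intro m hm; simp only [Finset.mem_Icc] at hm ⊢; omega
      · intro j hj; simp only [Finset.mem_Icc] at hj ⊢; omega
      · intro m hm; simp only [Finset.mem_Icc] at hm; show m - 1 + 1 = m; omega
      · intro j hj; simp only [Finset.mem_Icc] at hj; show j + 1 - 1 = j; omega
      · intro m hm
        simp only [Finset.mem_Icc] at hm
        show _ = pcount s t (m - 1) * arndtCount s t ((n - 1) - (m - 1))
        rw [show (n - 1) - (m - 1) = n - m by omega]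
    have hins2 : Finset.Icc 1 (n - 1) = insert 1 (Finset.Icc 2 (n - 1)) := by
      ext a; simp only [Finset.mem_Icc, Finset.mem_insert]; omega
    have hrec1 : arndtCount s t (n - 1)
        = 1 + ∑ m ∈ Finset.Icc 2 (n - 1), pcount s t m * arndtCount s t ((n - 1) - m) :=
      arndt_rec s t (by omega)
    rw [hre, hins2, Finset.sum_insert (by simp), pcount_one, zero_mul, zero_add, hrec1]
    omega
end

section
/- The number of compositions of n into parts all congruent to 1 or 3 modulo 5 satisfies, for n ≥ 6, the recurrence b(n) = b(n−1) + b(n−3) + b(n−5), with b(0)=1, b(1)=1, b(2)=1, b(3)=2, b(4)=3, b(5)=4. -/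
noncomputable def b13 (n : ℕ) : ℕ := compCount {x : ℕ | x % 5 = 1 ∨ x % 5 = 3} n


def P13 (x : ℕ) : Prop := x % 5 = 1 ∨ x % 5 = 3

instance : DecidablePred P13 := fun _ => instDecidableOr

abbrev T13 (n : ℕ) := {l : List ℕ // ((∀ x ∈ l, 0 < x) ∧ l.sum = n) ∧ ∀ x ∈ l, P13 x}

def compEquiv (n : ℕ) : T13 n ≃ {c : Composition n // ∀ x ∈ c.blocks, P13 x} where
  toFun l := ⟨⟨l.1, fun h => l.2.1.1 _ h, l.2.1.2⟩, l.2.2⟩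
  invFun c := ⟨c.1.blocks, ⟨fun x hx => c.1.blocks_pos hx, c.1.blocks_sum⟩, c.2⟩
  left_inv _ := rfl
  right_inv _ := rfl

noncomputable instance (n : ℕ) : Fintype (T13 n) := Fintype.ofEquiv _ (compEquiv n).symm

def headTail (n : ℕ) (hn : 1 ≤ n) :
    T13 n ≃ Σ a : {a : Fin (n+1) // P13 a.1}, T13 (n - a.1.1) where
  toFun l :=
    have hne : l.1 ≠ [] := by
      intro h
      have := l.2.1.2
      rw [h] at this
      simp at this; omega
    have hcons : l.1.head! :: l.1.tail = l.1 := List.cons_head!_tail hne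
    have hsum : l.1.head! + l.1.tail.sum = n := by
      have h2 : (l.1.head! :: l.1.tail).sum = n := by rw [hcons]; exact l.2.1.2
      simpa using h2
    ⟨⟨⟨l.1.head!, by omega⟩, l.2.2 _ (List.head!_mem_self hne)⟩,
      ⟨l.1.tail, ⟨fun x hx => l.2.1.1 x (List.mem_of_mem_tail hx),
        by show l.1.tail.sum = n - l.1.head!; omega⟩,
        fun x hx => l.2.2 x (List.mem_of_mem_tail hx)⟩⟩
  invFun p :=
    ⟨p.1.1.1 :: p.2.1, ⟨fun x hx => by
        rcases List.mem_cons.1 hx with h | h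
        · subst h
          rcases p.1.2 with h | h <;> omega
        · exact p.2.2.1.1 x h,
      by
        have h1 := p.2.2.1.2
        have h2 : p.1.1.1 ≤ n := Nat.lt_succ_iff.1 p.1.1.2
        simp [h1]; omega⟩,
      fun x hx => by
        rcases List.mem_cons.1 hx with h | h
        · subst h; exact p.1.2
        · exact p.2.2.2 x h⟩
  left_inv l := by
    apply Subtype.ext
    exact List.cons_head!_tail (by
      intro h
      have := l.2.1.2
      rw [h] at this
      simp at this; omega)
  right_inv p := rfl

noncomputable def b13sub (n : ℕ) : ℕ := Nat.card (T13 n)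

lemma b13sub_card (n : ℕ) : b13sub n = Fintype.card (T13 n) := Nat.card_eq_fintype_card

lemma b13sub_sum (n : ℕ) (hn : 1 ≤ n) :
    b13sub n = ∑ a ∈ (Finset.range (n+1)).filter P13, b13sub (n - a) := by
  rw [b13sub_card, Fintype.card_congr (headTail n hn), Fintype.card_sigma]
  rw [← Finset.sum_subtype ((Finset.univ.filter (fun a : Fin (n+1) => P13 a.1)))
    (by simp) (fun a : Fin (n+1) => Fintype.card (T13 (n - a.1)))]
  rw [Finset.sum_filter]
  rw [Fin.sum_univ_eq_sum_range (fun a => if P13 a then Fintype.card (T13 (n - a)) else 0)]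
  rw [← Finset.sum_filter]
  exact Finset.sum_congr rfl (fun a _ => (b13sub_card _).symm)

lemma filter_decomp (n : ℕ) (hn : 6 ≤ n) :
    (Finset.range (n+1)).filter P13 =
      insert 1 (insert 3 (((Finset.range (n-4)).filter P13).image (· + 5))) := by
  ext a
  simp only [Finset.mem_filter, Finset.mem_range, Finset.mem_insert, Finset.mem_image]
  constructor
  · rintro ⟨ha, hP⟩
    by_cases h5 : a < 5
    · unfold P13 at hP; omega
    · right; right
      exact ⟨a - 5, ⟨by omega, by unfold P13 at hP ⊢; omega⟩, by omega⟩
  · rintro (rfl | rfl | ⟨a', ⟨ha', hP⟩, rfl⟩)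
    · exact ⟨by omega, Or.inl rfl⟩
    · exact ⟨by omega, Or.inr rfl⟩
    · exact ⟨by omega, by unfold P13 at hP ⊢; omega⟩

lemma b13sub_rec (n : ℕ) (hn : 6 ≤ n) :
    b13sub n = b13sub (n-1) + b13sub (n-3) + b13sub (n-5) := by
  rw [b13sub_sum n (by omega), filter_decomp n hn]
  rw [Finset.sum_insert (by
    simp only [Finset.mem_insert, Finset.mem_image, Finset.mem_filter, Finset.mem_range]
    rintro (h | ⟨a, -, h⟩) <;> omega)]
  rw [Finset.sum_insert (by
    simp only [Finset.mem_image, Finset.mem_filter, Finset.mem_range]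
    rintro ⟨a, -, h⟩
    omega)]
  rw [Finset.sum_image (fun a _ b _ h => by omega)]
  rw [Finset.sum_congr rfl (fun a ha => by
    have := (Finset.mem_filter.1 ha).1
    have := Finset.mem_range.1 this
    show b13sub (n - (a+5)) = b13sub ((n-5) - a)
    congr 1; omega)]
  have h5 : n - 4 = (n-5)+1 := by omega
  rw [h5, ← b13sub_sum (n-5) (by omega)]
  ring

lemma b13sub_zero : b13sub 0 = 1 := by
  have : Unique (T13 0) := by
    refine ⟨⟨⟨[], ⟨by simp, by simp⟩, by simp⟩⟩, ?_⟩
    rintro ⟨l, ⟨hpos, hsum⟩, hP⟩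
    apply Subtype.ext
    show l = []
    rcases l with _ | ⟨x, t⟩
    · rfl
    · exfalso
      have hx := hpos x List.mem_cons_self
      have : x ≤ (x :: t).sum := List.single_le_sum (fun y hy => Nat.zero_le y) x List.mem_cons_self
      omega
  exact Nat.card_unique

lemma b13sub_1 : b13sub 1 = 1 := by
  rw [b13sub_sum 1 le_rfl]
  have : (Finset.range 2).filter P13 = {1} := by decide
  rw [this]; simp [b13sub_zero]

lemma b13sub_2 : b13sub 2 = 1 := by
  rw [b13sub_sum 2 (by omega)]
  have : (Finset.range 3).filter P13 = {1} := by decide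
  rw [this]; simp [b13sub_1]

lemma b13sub_3 : b13sub 3 = 2 := by
  rw [b13sub_sum 3 (by omega)]
  have : (Finset.range 4).filter P13 = {1, 3} := by decide
  rw [this]; simp [b13sub_2, b13sub_zero]

lemma b13sub_4 : b13sub 4 = 3 := by
  rw [b13sub_sum 4 (by omega)]
  have : (Finset.range 5).filter P13 = {1, 3} := by decide
  rw [this]; simp [b13sub_3, b13sub_1]

lemma b13sub_5 : b13sub 5 = 4 := by
  rw [b13sub_sum 5 (by omega)]
  have : (Finset.range 6).filter P13 = {1, 3} := by decide
  rw [this]; simp [b13sub_4, b13sub_2]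

lemma b13_eq_b13sub (n : ℕ) : b13 n = b13sub n := rfl

theorem comp_1_3_mod_5_recurrence :
    (∀ n : ℕ, 6 ≤ n → b13 n = b13 (n - 1) + b13 (n - 3) + b13 (n - 5)) ∧
    b13 0 = 1 ∧ b13 1 = 1 ∧ b13 2 = 1 ∧ b13 3 = 2 ∧ b13 4 = 3 ∧ b13 5 = 4 := by
  simp only [b13_eq_b13sub]
  exact ⟨fun n hn => b13sub_rec n hn, b13sub_zero, b13sub_1, b13sub_2, b13sub_3,
    b13sub_4, b13sub_5⟩
end

section
/- The number of compositions of n with s·c_{2i-1} > c_{2i} for every valid i (i.e., a_{s,1}(n)) equals the number of compositions of n into parts congruent to one of 1, 2, ..., s modulo s+1, and satisfies the s-bonacci-type recurrence a_{s,1}(n) = Σ_{j=1}^{s+1} a_{s,1}(n−j) for n > s+1. -/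
/-! ### Auxiliary material -/

/-- Structural version of the Arndt condition with `t = 1`. -/
def AC (s : ℕ) : List ℕ → Prop
  | x :: y :: rest => y < s * x ∧ AC s rest
  | _ => True

lemma ac_nil (s : ℕ) : AC s [] := trivial

lemma ac_singleton (s z : ℕ) : AC s [z] := trivial

lemma ac_cons_cons (s x y : ℕ) (rest : List ℕ) :
    AC s (x :: y :: rest) ↔ y < s * x ∧ AC s rest := Iff.rfl

lemma ac_iff (s : ℕ) : ∀ l : List ℕ, AC s l ↔ ArndtCond s 1 l
  | [] => by
    constructor
    · intro _ i hi
      simp only [List.length_nil] at hi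
      omega
    · intro _; trivial
  | [x] => by
    constructor
    · intro _ i hi
      simp only [List.length_singleton] at hi
      omega
    · intro _; trivial
  | x :: y :: rest => by
    rw [ac_cons_cons]
    constructor
    · rintro ⟨h1, h2⟩ i hi
      cases i with
      | zero =>
        simpa using h1
      | succ i =>
        have e1 : 2 * (i + 1) + 1 = (2 * i + 1) + 1 + 1 := by ring
        have e2 : 2 * (i + 1) = (2 * i) + 1 + 1 := by ring
        rw [e1, e2]
        simp only [List.getElem!_cons_succ]
        have hr := (ac_iff s rest).1 h2
        apply hr
        simp only [List.length_cons] at hi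
        omega
    · intro h
      constructor
      · have h0 := h 0 (by simp only [List.length_cons]; omega)
        simpa using h0
      · refine (ac_iff s rest).2 ?_
        intro i hi
        have hi' : 2 * (i + 1) + 1 < (x :: y :: rest).length := by
          simp only [List.length_cons]; omega
        have := h (i + 1) hi'
        have e1 : 2 * (i + 1) + 1 = (2 * i + 1) + 1 + 1 := by ring
        have e2 : 2 * (i + 1) = (2 * i) + 1 + 1 := by ring
        rw [e1, e2] at this
        simpa using this

/-- The map from Arndt compositions to compositions avoiding multiples of `s+1`. -/
def toA (s : ℕ) : List ℕ → List ℕ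
  | [] => []
  | [z] => List.replicate z 1
  | x :: y :: rest =>
      List.replicate (x - y / s - 1) 1 ++ ((s + 1) * (y / s) + y % s + 1) :: toA s rest

lemma toA_nil (s : ℕ) : toA s [] = [] := rfl

lemma toA_single (s z : ℕ) : toA s [z] = List.replicate z 1 := rfl

lemma toA_pair (s x y : ℕ) (rest : List ℕ) :
    toA s (x :: y :: rest) =
      List.replicate (x - y / s - 1) 1 ++ ((s + 1) * (y / s) + y % s + 1) :: toA s rest := rfl

lemma pair_facts {s x y : ℕ} (hs : 0 < s) (hy : 0 < y) (hxy : y < s * x) :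
    x - y / s - 1 + ((s + 1) * (y / s) + y % s + 1) = x + y ∧
    ((s + 1) * (y / s) + y % s + 1) ≠ 1 ∧
    ((s + 1) * (y / s) + y % s + 1) % (s + 1) = y % s + 1 ∧
    y % s + 1 ≤ s ∧
    y / s < x := by
  have h1 : s * (y / s) + y % s = y := Nat.div_add_mod y s
  have hrs : y % s < s := Nat.mod_lt _ hs
  have hqx : y / s < x := by
    by_contra hcon
    push_neg at hcon
    have h2 : s * x ≤ s * (y / s) := Nat.mul_le_mul le_rfl hcon
    omega
  have e : (s + 1) * (y / s) = s * (y / s) + y / s := by ring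
  refine ⟨by rw [e]; omega, ?_, ?_, by omega, hqx⟩
  · intro hcon
    have hA : (s + 1) * (y / s) + y % s = 0 := by
      have := Nat.succ_injective hcon
      simpa using this
    have h5 : (s + 1) * (y / s) = 0 := Nat.eq_zero_of_add_eq_zero_right hA
    have h7 : y % s = 0 := Nat.eq_zero_of_add_eq_zero_left hA
    have h6 : y / s = 0 := by
      rcases Nat.mul_eq_zero.1 h5 with h | h
      · omega
      · exact h
    rw [h6, h7] at h1
    simp at h1
    omega
  · have e2 : (s + 1) * (y / s) + y % s + 1 = (s + 1) * (y / s) + (y % s + 1) := by ring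
    rw [e2, Nat.mul_add_mod, Nat.mod_eq_of_lt (by omega)]

lemma B_div_mod {s q r : ℕ} (hr : r < s) :
    ((s + 1) * q + (r + 1)) / (s + 1) = q ∧ ((s + 1) * q + (r + 1)) % (s + 1) = r + 1 := by
  constructor
  · rw [Nat.mul_add_div (by omega), Nat.div_eq_of_lt (show r + 1 < s + 1 by omega)]
    omega
  · rw [Nat.mul_add_mod, Nat.mod_eq_of_lt (by omega)]

lemma pair_B_inj {s : ℕ} (hs : 0 < s) (y : ℕ) :
    ((s + 1) * (y / s) + (y % s + 1)) / (s + 1) = y / s ∧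
    ((s + 1) * (y / s) + (y % s + 1)) % (s + 1) = y % s + 1 :=
  B_div_mod (Nat.mod_lt _ hs)

lemma toA_props {s : ℕ} (hs : 0 < s) :
    ∀ l : List ℕ, (∀ x ∈ l, 0 < x) → AC s l →
      (toA s l).sum = l.sum ∧ ∀ b ∈ toA s l, 0 < b ∧ b % (s + 1) ≠ 0
  | [] => by
    intro _ _
    simp [toA_nil]
  | [z] => by
    intro hp _
    constructor
    · rw [toA_single]
      simp [List.sum_replicate]
    · intro b hb
      rw [toA_single] at hb
      rw [List.eq_of_mem_replicate hb]
      refine ⟨by norm_num, ?_⟩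
      rw [Nat.mod_eq_of_lt (by omega)]
      omega
  | x :: y :: rest => by
    intro hp hac
    rw [ac_cons_cons] at hac
    obtain ⟨h1, h2⟩ := hac
    have hy : 0 < y := hp y (by simp)
    obtain ⟨e1, e2, e3, e4, e5⟩ := pair_facts hs hy h1
    obtain ⟨ihs, ihm⟩ := toA_props hs rest (fun a ha => hp a (by simp [ha])) h2
    constructor
    · rw [toA_pair]
      simp only [List.sum_append, List.sum_cons, List.sum_replicate, smul_eq_mul, mul_one]
      rw [ihs, ← Nat.add_assoc, e1, Nat.add_assoc]
    · intro b hb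
      rw [toA_pair] at hb
      rcases List.mem_append.1 hb with hb | hb
      · rw [List.eq_of_mem_replicate hb]
        refine ⟨by norm_num, ?_⟩
        rw [Nat.mod_eq_of_lt (by omega)]
        omega
      · rcases List.mem_cons.1 hb with rfl | hb
        · exact ⟨by omega, by rw [e3]; omega⟩
        · exact ihm b hb

lemma replicate_cons_eq {a a' B B' : ℕ} {M M' : List ℕ} (hB : B ≠ 1) (hB' : B' ≠ 1)
    (h : List.replicate a 1 ++ B :: M = List.replicate a' 1 ++ B' :: M') :
    a = a' ∧ B = B' ∧ M = M' := by
  induction a generalizing a' with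
  | zero =>
    cases a' with
    | zero => simpa using h
    | succ a' =>
      rw [List.replicate_succ] at h
      simp only [List.replicate, List.nil_append, List.cons_append, List.cons.injEq] at h
      exact absurd h.1 hB
  | succ a ih =>
    cases a' with
    | zero =>
      rw [List.replicate_succ] at h
      simp only [List.replicate, List.nil_append, List.cons_append, List.cons.injEq] at h
      exact absurd h.1.symm hB'
    | succ a' =>
      rw [List.replicate_succ, List.replicate_succ] at h
      simp only [List.cons_append, List.cons.injEq, true_and] at h
      obtain ⟨e1, e2, e3⟩ := ih h
      exact ⟨by omega, e2, e3⟩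

lemma toA_ne_one {s : ℕ} (hs : 0 < s) {x y : ℕ} (hy : 0 < y) (hxy : y < s * x) :
    ((s + 1) * (y / s) + y % s + 1) ≠ 1 := (pair_facts hs hy hxy).2.1

lemma toA_inj {s : ℕ} (hs : 0 < s) :
    ∀ l₁ l₂ : List ℕ, (∀ x ∈ l₁, 0 < x) → AC s l₁ → (∀ x ∈ l₂, 0 < x) → AC s l₂ →
      toA s l₁ = toA s l₂ → l₁ = l₂
  | [], [], _, _, _, _, _ => rfl
  | [], [z], hp1, _, hp2, _, h => by
    rw [toA_nil, toA_single] at h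
    have hz : 0 < z := hp2 z (by simp)
    have := congrArg List.length h
    simp at this
    omega
  | [z], [], hp1, _, hp2, _, h => by
    rw [toA_nil, toA_single] at h
    have hz : 0 < z := hp1 z (by simp)
    have := congrArg List.length h
    simp at this
    omega
  | [z], [z'], hp1, _, hp2, _, h => by
    rw [toA_single, toA_single] at h
    have := congrArg List.length h
    simp at this
    rw [this]
  | [], x :: y :: rest, hp1, _, hp2, _, h => by
    rw [toA_nil, toA_pair] at h
    exact absurd h.symm (by simp)
  | x :: y :: rest, [], hp1, _, hp2, _, h => by
    rw [toA_nil, toA_pair] at h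
    exact absurd h (by simp)
  | [z], x :: y :: rest, hp1, hc1, hp2, hc2, h => by
    rw [toA_single, toA_pair] at h
    rw [ac_cons_cons] at hc2
    have hy : 0 < y := hp2 y (by simp)
    have hne := toA_ne_one hs hy hc2.1
    have hmem : ((s + 1) * (y / s) + y % s + 1) ∈ List.replicate z 1 := by
      rw [h]; simp
    exact absurd (List.eq_of_mem_replicate hmem) hne
  | x :: y :: rest, [z], hp1, hc1, hp2, hc2, h => by
    rw [toA_single, toA_pair] at h
    rw [ac_cons_cons] at hc1
    have hy : 0 < y := hp1 y (by simp)
    have hne := toA_ne_one hs hy hc1.1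
    have hmem : ((s + 1) * (y / s) + y % s + 1) ∈ List.replicate z 1 := by
      rw [← h]; simp
    exact absurd (List.eq_of_mem_replicate hmem) hne
  | x :: y :: rest, x' :: y' :: rest', hp1, hc1, hp2, hc2, h => by
    rw [toA_pair, toA_pair] at h
    rw [ac_cons_cons] at hc1 hc2
    have hy : 0 < y := hp1 y (by simp)
    have hy' : 0 < y' := hp2 y' (by simp)
    obtain ⟨e1, e2, e3, e4, e5⟩ := pair_facts hs hy hc1.1
    obtain ⟨e1', e2', e3', e4', e5'⟩ := pair_facts hs hy' hc2.1
    obtain ⟨ha, hB, hM⟩ := replicate_cons_eq e2 e2' h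
    have hrest : rest = rest' :=
      toA_inj hs rest rest' (fun a ha => hp1 a (by simp [ha])) hc1.2
        (fun a ha => hp2 a (by simp [ha])) hc2.2 hM
    have hBg : (s + 1) * (y / s) + (y % s + 1) = (s + 1) * (y' / s) + (y' % s + 1) := by
      omega
    have p1 := pair_B_inj hs y
    have p1' := pair_B_inj hs y'
    have hdiv : y / s = y' / s := by
      have hBdiv : ((s + 1) * (y / s) + (y % s + 1)) / (s + 1)
          = ((s + 1) * (y' / s) + (y' % s + 1)) / (s + 1) := by rw [hBg]
      rw [p1.1, p1'.1] at hBdiv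
      exact hBdiv
    have hmod : y % s = y' % s := by
      have hBmod : ((s + 1) * (y / s) + (y % s + 1)) % (s + 1)
          = ((s + 1) * (y' / s) + (y' % s + 1)) % (s + 1) := by rw [hBg]
      rw [p1.2, p1'.2] at hBmod
      omega
    have d1 : s * (y / s) + y % s = y := Nat.div_add_mod y s
    have d2 : s * (y' / s) + y' % s = y' := Nat.div_add_mod y' s
    rw [hdiv, hmod] at d1
    have hyy : y = y' := by omega
    have hxx : x = x' := by
      rw [hdiv] at ha e5
      omega
    rw [hxx, hyy, hrest]

lemma toA_surj {s : ℕ} (hs : 0 < s) :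
    ∀ N : ℕ, ∀ m : List ℕ, m.length ≤ N → (∀ b ∈ m, 0 < b ∧ b % (s + 1) ≠ 0) →
      ∃ l : List ℕ, (∀ x ∈ l, 0 < x) ∧ AC s l ∧ toA s l = m := by
  intro N
  induction N with
  | zero =>
    intro m hm _
    have : m = [] := List.length_eq_zero_iff.1 (by omega)
    exact ⟨[], by simp, ac_nil s, by rw [this, toA_nil]⟩
  | succ N ih =>
    intro m hm hmem
    set a := (m.takeWhile (fun b => b == 1)).length with ha
    have hsplit : m.takeWhile (fun b => b == 1) ++ m.dropWhile (fun b => b == 1) = m :=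
      List.takeWhile_append_dropWhile
    have htake : m.takeWhile (fun b => b == 1) = List.replicate a 1 := by
      rw [ha]
      apply List.eq_replicate_of_mem
      intro b hb
      have := List.mem_takeWhile_imp hb
      simpa using this
    rcases hdrop : m.dropWhile (fun b => b == 1) with _ | ⟨B, M⟩
    · -- m is all ones
      rw [hdrop, List.append_nil, htake] at hsplit
      rcases Nat.eq_zero_or_pos a with ha0 | hapos
      · refine ⟨[], by simp, ac_nil s, ?_⟩
        rw [toA_nil, ← hsplit, ha0]
        simp
      · refine ⟨[a], ?_, ac_singleton s a, ?_⟩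
        · intro x hx
          simp at hx
          omega
        · rw [toA_single, ← hsplit]
    · -- m = replicate a 1 ++ B :: M with B ≠ 1
      have hBne : B ≠ 1 := by
        have h0 := List.head?_dropWhile_not (fun b => b == 1) m
        rw [hdrop] at h0
        simp at h0
        exact h0
      have hBm : B ∈ m := by
        have : B ∈ m.dropWhile (fun b => b == 1) := by rw [hdrop]; simp
        exact (List.dropWhile_sublist _).subset this
      have hMm : ∀ b ∈ M, b ∈ m := by
        intro b hb
        have : b ∈ m.dropWhile (fun b => b == 1) := by rw [hdrop]; simp [hb]
        exact (List.dropWhile_sublist _).subset this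
      obtain ⟨hBpos, hBmod⟩ := hmem B hBm
      have hB2 : 2 ≤ B := by omega
      have hlen : m.length = a + 1 + M.length := by
        conv_lhs => rw [← hsplit]
        rw [htake, hdrop]
        simp
        omega
      obtain ⟨l', hl'p, hl'c, hl'e⟩ := ih M (by omega) (fun b hb => hmem b (hMm b hb))
      obtain ⟨q, r', hqr, hr's⟩ : ∃ q r', B = (s + 1) * q + r' ∧ r' < s + 1 :=
        ⟨B / (s + 1), B % (s + 1), (Nat.div_add_mod B (s + 1)).symm, Nat.mod_lt _ (by omega)⟩
      have hmodB : B % (s + 1) = r' := by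
        rw [hqr, Nat.mul_add_mod, Nat.mod_eq_of_lt hr's]
      rw [hmodB] at hBmod
      have hr'1 : 1 ≤ r' := by omega
      have hbridge : (s + 1) * q = s * q + q := by ring
      have hyq : s * q + r' - 1 = s * q + (r' - 1) := by omega
      have hydiv : (s * q + r' - 1) / s = q := by
        rw [hyq, Nat.mul_add_div hs, Nat.div_eq_of_lt (show r' - 1 < s by omega)]
        omega
      have hymod : (s * q + r' - 1) % s = r' - 1 := by
        rw [hyq, Nat.mul_add_mod, Nat.mod_eq_of_lt (show r' - 1 < s by omega)]
      have hypos : 0 < s * q + r' - 1 := by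
        rcases Nat.eq_zero_or_pos q with hq0 | hqpos
        · have h0 : s * q = 0 := by rw [hq0]; ring
          omega
        · have h1 : s * 1 ≤ s * q := Nat.mul_le_mul le_rfl hqpos
          have h2 : s * 1 = s := by ring
          omega
      have hyx : s * q + r' - 1 < s * (a + q + 1) := by
        have h6 : s * (q + 1) ≤ s * (a + q + 1) := Nat.mul_le_mul le_rfl (by omega)
        have h7 : s * (q + 1) = s * q + s := by ring
        omega
      refine ⟨(a + q + 1) :: (s * q + r' - 1) :: l', ?_, ?_, ?_⟩
      · intro t ht
        rcases List.mem_cons.1 ht with rfl | ht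
        · omega
        · rcases List.mem_cons.1 ht with rfl | ht
          · exact hypos
          · exact hl'p t ht
      · rw [ac_cons_cons]
        exact ⟨hyx, hl'c⟩
      · rw [toA_pair, hl'e, hydiv, hymod]
        have e1 : a + q + 1 - q - 1 = a := by omega
        have e2 : (s + 1) * q + (r' - 1) + 1 = B := by omega
        rw [e1, e2, ← hsplit, htake, hdrop]

/-- Equivalence between our list-based compositions and Mathlib's `Composition`. -/
def toCompEquiv (n : ℕ) (P : List ℕ → Prop) :
    {l : List ℕ // IsComposition n l ∧ P l} ≃ {c : Composition n // P c.blocks} where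
  toFun p := ⟨⟨p.1, fun hi => p.2.1.1 _ hi, p.2.1.2⟩, p.2.2⟩
  invFun c := ⟨c.1.blocks, ⟨fun x hx => c.1.blocks_pos hx, c.1.blocks_sum⟩, c.2⟩
  left_inv p := rfl
  right_inv c := rfl

instance instFiniteComp (n : ℕ) (P : List ℕ → Prop) :
    Finite {l : List ℕ // IsComposition n l ∧ P l} :=
  Finite.of_equiv _ (toCompEquiv n P).symm

lemma nat_card_sigma {ι : Type*} [Fintype ι] (f : ι → Type*) [∀ i, Finite (f i)] :
    Nat.card ((i : ι) × f i) = ∑ i, Nat.card (f i) := by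
  letI : ∀ i, Fintype (f i) := fun i => Fintype.ofFinite _
  simp only [Nat.card_eq_fintype_card]
  exact Fintype.card_sigma

/-- Abbreviation for the counted sets avoiding multiples of `s+1`. -/
def Tset (s n : ℕ) : Type := {l : List ℕ // IsComposition n l ∧ ∀ x ∈ l, x % (s + 1) ≠ 0}

instance (s n : ℕ) : Finite (Tset s n) := instFiniteComp n _

/-- The merging map used for the recurrence. -/
def Fmap (s n : ℕ) (hn : s + 1 < n)
    (p : (j : ↥(Finset.Icc 1 (s + 1))) × Tset s (n - (j : ℕ))) : Tset s n := by
  refine ⟨if (p.1 : ℕ) ≤ s then (p.1 : ℕ) :: p.2.1 else (p.2.1.headI + s + 1) :: p.2.1.tail, ?_⟩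
  obtain ⟨⟨j, hj⟩, ⟨m, hm⟩⟩ := p
  simp only [Finset.mem_Icc] at hj
  have hmp : ∀ x ∈ m, 0 < x := hm.1.1
  have hms : m.sum = n - j := hm.1.2
  have hmr : ∀ x ∈ m, x % (s + 1) ≠ 0 := hm.2
  by_cases hjs : j ≤ s
  · rw [if_pos hjs]
    refine ⟨⟨?_, ?_⟩, ?_⟩
    · intro t ht
      rcases List.mem_cons.1 ht with rfl | ht
      · omega
      · exact hmp t ht
    · simp only [List.sum_cons, hms]
      omega
    · intro t ht
      rcases List.mem_cons.1 ht with rfl | ht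
      · rw [Nat.mod_eq_of_lt (by omega)]
        omega
      · exact hmr t ht
  · rw [if_neg hjs]
    have hj1 : j = s + 1 := by omega
    have hmsum : m.sum = n - (s + 1) := by
      have h9 := hms
      try dsimp only at h9
      omega
    obtain ⟨c, t, rfl⟩ : ∃ c t, m = c :: t := by
      cases m with
      | nil => simp at hmsum; omega
      | cons c t => exact ⟨c, t, rfl⟩
    simp only [List.headI_cons, List.tail_cons]
    refine ⟨⟨?_, ?_⟩, ?_⟩
    · intro u hu
      rcases List.mem_cons.1 hu with rfl | hu
      · omega
      · exact hmp u (by simp [hu])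
    · simp only [List.sum_cons] at hmsum ⊢
      omega
    · intro u hu
      rcases List.mem_cons.1 hu with rfl | hu
      · have e : (c + s + 1) % (s + 1) = c % (s + 1) := by
          have e2 : c + s + 1 = c + (s + 1) := by ring
          rw [e2, Nat.add_mod_right]
        rw [e]
        exact hmr c (by simp)
      · exact hmr u (by simp [hu])

lemma Fmap_val (s n : ℕ) (hn : s + 1 < n)
    (p : (j : ↥(Finset.Icc 1 (s + 1))) × Tset s (n - (j : ℕ))) :
    (Fmap s n hn p).1 =
      if (p.1 : ℕ) ≤ s then (p.1 : ℕ) :: p.2.1 else (p.2.1.headI + s + 1) :: p.2.1.tail := rfl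

lemma tset_rec (s n : ℕ) (hn : s + 1 < n) :
    Nat.card (Tset s n) = ∑ j ∈ Finset.Icc 1 (s + 1), Nat.card (Tset s (n - j)) := by
  classical
  have hbij : Function.Bijective (Fmap s n hn) := by
    constructor
    · rintro ⟨⟨j, hj⟩, ⟨m, hm⟩⟩ ⟨⟨j', hj'⟩, ⟨m', hm'⟩⟩ hF
      simp only [Finset.mem_Icc] at hj hj'
      have hF' := congrArg Subtype.val hF
      rw [Fmap_val, Fmap_val] at hF'
      dsimp only at hF'
      have hmne : ¬ j ≤ s → ∃ c t, m = c :: t := by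
        intro hjs
        have hj1 : j = s + 1 := by omega
        have hmsum : m.sum = n - (s + 1) := by
          have h9 := hm.1.2
          try dsimp only at h9
          omega
        cases m with
        | nil => simp at hmsum; omega
        | cons c t => exact ⟨c, t, rfl⟩
      have hmne' : ¬ j' ≤ s → ∃ c t, m' = c :: t := by
        intro hjs
        have hj1 : j' = s + 1 := by omega
        have hmsum : m'.sum = n - (s + 1) := by
          have h9 := hm'.1.2
          try dsimp only at h9
          omega
        cases m' with
        | nil => simp at hmsum; omega
        | cons c t => exact ⟨c, t, rfl⟩
      have key : j = j' ∧ m = m' := by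
        by_cases h1 : j ≤ s <;> by_cases h2 : j' ≤ s
        · rw [if_pos h1, if_pos h2] at hF'
          simp only [List.cons.injEq] at hF'
          exact hF'
        · obtain ⟨c', t', rfl⟩ := hmne' h2
          rw [if_pos h1, if_neg h2] at hF'
          simp only [List.headI_cons, List.tail_cons, List.cons.injEq] at hF'
          omega
        · obtain ⟨c, t, rfl⟩ := hmne h1
          rw [if_neg h1, if_pos h2] at hF'
          simp only [List.headI_cons, List.tail_cons, List.cons.injEq] at hF'
          omega
        · obtain ⟨c, t, rfl⟩ := hmne h1
          obtain ⟨c', t', rfl⟩ := hmne' h2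
          rw [if_neg h1, if_neg h2] at hF'
          simp only [List.headI_cons, List.tail_cons, List.cons.injEq] at hF'
          refine ⟨by omega, ?_⟩
          simp only [List.cons.injEq]
          exact ⟨by omega, hF'.2⟩
      obtain ⟨rfl, rfl⟩ := key
      rfl
    · rintro ⟨l, hl⟩
      have hlp : ∀ x ∈ l, 0 < x := hl.1.1
      have hls : l.sum = n := hl.1.2
      have hlr : ∀ x ∈ l, x % (s + 1) ≠ 0 := hl.2
      obtain ⟨b, t, rfl⟩ : ∃ b t, l = b :: t := by
        cases l with
        | nil => simp at hls; omega
        | cons b t => exact ⟨b, t, rfl⟩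
      have hbpos : 0 < b := hlp b (by simp)
      have hbr : b % (s + 1) ≠ 0 := hlr b (by simp)
      simp only [List.sum_cons] at hls
      by_cases hbs : b ≤ s
      · refine ⟨⟨⟨b, ?_⟩, ⟨t, ⟨⟨?_, ?_⟩, ?_⟩⟩⟩, ?_⟩
        · simp only [Finset.mem_Icc]; omega
        · exact fun u hu => hlp u (by simp [hu])
        · show t.sum = n - b
          omega
        · exact fun u hu => hlr u (by simp [hu])
        · apply Subtype.ext
          rw [Fmap_val]
          dsimp only
          rw [if_pos hbs]
      · have hbne : b ≠ s + 1 := by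
          intro hcon
          rw [hcon] at hbr
          simp at hbr
        have hb2 : s + 2 ≤ b := by omega
        refine ⟨⟨⟨s + 1, ?_⟩, ⟨(b - (s + 1)) :: t, ⟨⟨?_, ?_⟩, ?_⟩⟩⟩, ?_⟩
        · simp only [Finset.mem_Icc]; omega
        · intro u hu
          rcases List.mem_cons.1 hu with rfl | hu
          · omega
          · exact hlp u (by simp [hu])
        · show ((b - (s + 1)) :: t).sum = n - (s + 1)
          simp only [List.sum_cons]
          omega
        · intro u hu
          rcases List.mem_cons.1 hu with rfl | hu
          · have e : b - (s + 1) + (s + 1) = b := by omega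
            intro hcon
            have : b % (s + 1) = 0 := by
              conv_lhs => rw [← e]
              rw [Nat.add_mod_right]
              exact hcon
            exact hbr this
          · exact hlr u (by simp [hu])
        · apply Subtype.ext
          rw [Fmap_val]
          dsimp only
          rw [if_neg (by omega)]
          simp only [List.headI_cons, List.tail_cons]
          congr 1
          omega
  calc Nat.card (Tset s n)
      = Nat.card ((j : ↥(Finset.Icc 1 (s + 1))) × Tset s (n - (j : ℕ))) :=
        (Nat.card_congr (Equiv.ofBijective (Fmap s n hn) hbij)).symm
    _ = ∑ j : ↥(Finset.Icc 1 (s + 1)), Nat.card (Tset s (n - (j : ℕ))) :=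
        nat_card_sigma _
    _ = ∑ j ∈ Finset.Icc 1 (s + 1), Nat.card (Tset s (n - j)) :=
        Finset.sum_coe_sort (Finset.Icc 1 (s + 1)) (fun j => Nat.card (Tset s (n - j)))

/-- The main bijection between Arndt compositions and `Tset`. -/
lemma arndt_eq_tset {s : ℕ} (hs : 0 < s) (n : ℕ) :
    arndtCount s 1 n = Nat.card (Tset s n) := by
  apply Nat.card_congr
  refine Equiv.ofBijective (fun p => ⟨toA s p.1, ⟨?_, ?_⟩, ?_⟩) ⟨?_, ?_⟩
  · -- positivity
    have hac : AC s p.1 := (ac_iff s p.1).2 p.2.2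
    obtain ⟨hsum, hmem⟩ := toA_props hs p.1 p.2.1.1 hac
    exact fun b hb => (hmem b hb).1
  · -- sum
    have hac : AC s p.1 := (ac_iff s p.1).2 p.2.2
    obtain ⟨hsum, hmem⟩ := toA_props hs p.1 p.2.1.1 hac
    rw [hsum, p.2.1.2]
  · -- residues
    have hac : AC s p.1 := (ac_iff s p.1).2 p.2.2
    obtain ⟨hsum, hmem⟩ := toA_props hs p.1 p.2.1.1 hac
    exact fun b hb => (hmem b hb).2
  · rintro ⟨l₁, h1⟩ ⟨l₂, h2⟩ h
    have h' : toA s l₁ = toA s l₂ := congrArg Subtype.val h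
    exact Subtype.ext
      (toA_inj hs l₁ l₂ h1.1.1 ((ac_iff s l₁).2 h1.2) h2.1.1 ((ac_iff s l₂).2 h2.2) h')
  · rintro ⟨m, hm⟩
    obtain ⟨l, hlp, hlc, hle⟩ :=
      toA_surj hs m.length m le_rfl (fun b hb => ⟨hm.1.1 b hb, hm.2 b hb⟩)
    refine ⟨⟨l, ⟨hlp, ?_⟩, (ac_iff s l).1 hlc⟩, ?_⟩
    · obtain ⟨hsum, _⟩ := toA_props hs l hlp hlc
      rw [← hsum, hle, hm.1.2]
    · exact Subtype.ext hle

theorem arndt_s_1 (s : ℕ) (hs : 0 < s) :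
    (∀ n : ℕ, arndtCount s 1 n =
      compCount {x : ℕ | ∃ j, 1 ≤ j ∧ j ≤ s ∧ x % (s + 1) = j} n) ∧
    (∀ n : ℕ, s + 1 < n →
      arndtCount s 1 n = ∑ j ∈ Finset.Icc 1 (s + 1), arndtCount s 1 (n - j)) := by
  have hA : ∀ n : ℕ,
      compCount {x : ℕ | ∃ j, 1 ≤ j ∧ j ≤ s ∧ x % (s + 1) = j} n = Nat.card (Tset s n) := by
    intro n
    apply Nat.card_congr
    apply Equiv.subtypeEquivRight
    intro l
    constructor
    · rintro ⟨hc, hm⟩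
      refine ⟨hc, fun x hx => ?_⟩
      obtain ⟨j, hj1, hj2, hj3⟩ := hm x hx
      rw [hj3]
      omega
    · rintro ⟨hc, hm⟩
      refine ⟨hc, fun x hx => ?_⟩
      have := hm x hx
      have hlt : x % (s + 1) < s + 1 := Nat.mod_lt _ (by omega)
      exact ⟨x % (s + 1), by omega, by omega, rfl⟩
  constructor
  · intro n
    rw [hA n, arndt_eq_tset hs n]
  · intro n hn
    rw [arndt_eq_tset hs n, tset_rec s n hn]
    apply Finset.sum_congr rfl
    intro j hj
    rw [arndt_eq_tset hs (n - j)]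
end

section
/- The generating function Σ_{n≥0} a_{s,t}(n) x^n, for gcd(s,t)=1, equals (1 − x^{s+t}) / (1 − x^{s+t} − Σ_{r=0}^{s−1} x^{m_r}), where m_r = r + ⌈(r·t+1)/s⌉; equivalently, (1 − x^{s+t} − Σ_{r=0}^{s−1} x^{m_r}) · Σ_{n≥0} a_{s,t}(n) x^n = 1 − x^{s+t} as an identity of formal power series. -/
namespace ArndtGF

open Finset

/-- The subtype of Arndt compositions of `n`. -/
abbrev T (s t n : ℕ) : Type := {l : List ℕ // IsComposition n l ∧ ArndtCond s t l}

instance finiteT (s t n : ℕ) : Finite (T s t n) := by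
  apply Finite.of_injective
    (fun l : T s t n => (⟨l.1, fun hi => l.2.1.1 _ hi, l.2.1.2⟩ : Composition n))
  intro a b h
  exact Subtype.ext (congrArg Composition.blocks h)

lemma arndtCount_zero (s t : ℕ) : arndtCount s t 0 = 1 := by
  have : Unique (T s t 0) :=
    { default := ⟨[], ⟨fun x hx => absurd hx List.not_mem_nil, rfl⟩,
        fun i h => absurd h (by simp)⟩
      uniq := by
        rintro ⟨l, ⟨hpos, hsum⟩, -⟩
        apply Subtype.ext
        cases l with
        | nil => rfl
        | cons a l' =>
          have := hpos a List.mem_cons_self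
          simp only [List.sum_cons] at hsum
          omega }
  exact Nat.card_unique

/-- The finset of admissible first pairs. -/
def S (s t n : ℕ) : Finset (ℕ × ℕ) :=
  (Ioc 0 n ×ˢ Ioc 0 n).filter fun x => t * x.2 < s * x.1 ∧ x.1 + x.2 ≤ n

lemma mem_S {s t n : ℕ} {x : ℕ × ℕ} :
    x ∈ S s t n ↔ 0 < x.1 ∧ 0 < x.2 ∧ t * x.2 < s * x.1 ∧ x.1 + x.2 ≤ n := by
  simp only [S, mem_filter, mem_product, mem_Ioc]
  constructor
  · rintro ⟨⟨⟨h1, -⟩, ⟨h2, -⟩⟩, h3, h4⟩; exact ⟨h1, h2, h3, h4⟩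
  · rintro ⟨h1, h2, h3, h4⟩; exact ⟨⟨⟨h1, by omega⟩, ⟨h2, by omega⟩⟩, h3, h4⟩

variable {s t : ℕ}

lemma arndt_cons {a b : ℕ} {l : List ℕ} (hab : t * b < s * a) (hl : ArndtCond s t l) :
    ArndtCond s t (a :: b :: l) := by
  intro i hi
  match i with
  | 0 => simpa using hab
  | (j+1) =>
    have e1 : 2 * (j+1) + 1 = (2*j+1) + 1 + 1 := by ring
    have e2 : 2 * (j+1) = (2*j) + 1 + 1 := by ring
    rw [e1, e2]
    rw [e1] at hi
    simp only [List.getElem!_cons_succ, List.length_cons] at hi ⊢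
    exact hl j (by omega)

lemma arndt_of_cons {a b : ℕ} {l : List ℕ} (h : ArndtCond s t (a :: b :: l)) :
    t * b < s * a ∧ ArndtCond s t l := by
  constructor
  · have := h 0 (by simp)
    simpa using this
  · intro j hj
    have e1 : 2 * (j+1) + 1 = (2*j+1) + 1 + 1 := by ring
    have e2 : 2 * (j+1) = (2*j) + 1 + 1 := by ring
    have := h (j+1) (by rw [e1]; simp only [List.length_cons] at hj ⊢; omega)
    rw [e1, e2] at this
    simpa only [List.getElem!_cons_succ] using this

/-- The inverse decomposition map. -/
def g (n : ℕ) (hn : n ≠ 0) :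
    Option ((x : ↥(S s t n)) × T s t (n - (x.1.1 + x.1.2))) → T s t n
  | none => ⟨[n], ⟨⟨fun x hx => by simp only [List.mem_singleton] at hx; omega, by simp⟩,
      fun i h => absurd h (by simp)⟩⟩
  | some ⟨⟨(a, b), hx⟩, ⟨l, hl⟩⟩ => by
      refine ⟨a :: b :: l, ⟨⟨?_, ?_⟩, ?_⟩⟩
      · intro x hx'
        obtain ⟨ha, hb, -, -⟩ := mem_S.1 hx
        rcases List.mem_cons.1 hx' with rfl | hx'
        · exact ha
        rcases List.mem_cons.1 hx' with rfl | hx'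
        · exact hb
        · exact hl.1.1 x hx'
      · obtain ⟨-, -, -, hle⟩ := mem_S.1 hx
        have hsum : l.sum = n - (a + b) := hl.1.2
        simp only [List.sum_cons]
        omega
      · obtain ⟨-, -, hab, -⟩ := mem_S.1 hx
        exact arndt_cons hab hl.2

lemma g_inj (n : ℕ) (hn : n ≠ 0) : Function.Injective (g (s := s) (t := t) n hn) := by
  rintro (- | ⟨⟨⟨a, b⟩, hx⟩, l, hl⟩) (- | ⟨⟨⟨a', b'⟩, hx'⟩, l', hl'⟩) h
  · rfl
  · exfalso
    have h1 : ([n] : List ℕ) = a' :: b' :: l' := congrArg Subtype.val h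
    simp at h1
  · exfalso
    have h1 : (a :: b :: l : List ℕ) = [n] := congrArg Subtype.val h
    simp at h1
  · have h1 : (a :: b :: l : List ℕ) = a' :: b' :: l' := congrArg Subtype.val h
    obtain ⟨rfl, rfl, rfl⟩ : a = a' ∧ b = b' ∧ l = l' := by
      simpa using h1
    rfl

lemma g_surj (n : ℕ) (hn : n ≠ 0) : Function.Surjective (g (s := s) (t := t) n hn) := by
  rintro ⟨(- | ⟨a, (- | ⟨b, l'⟩)⟩), hcomp, harndt⟩
  · exact absurd hcomp.2 (by simpa using Ne.symm hn)
  · obtain rfl : a = n := by simpa using hcomp.2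
    exact ⟨none, rfl⟩
  · obtain ⟨hab, harndt'⟩ := arndt_of_cons harndt
    have ha : 0 < a := hcomp.1 a (by simp)
    have hb : 0 < b := hcomp.1 b (by simp)
    have hsum : a + (b + l'.sum) = n := by simpa using hcomp.2
    refine ⟨some ⟨⟨(a, b), mem_S.2 ⟨ha, hb, hab, by omega⟩⟩,
      ⟨l', ⟨fun x hx => hcomp.1 x (by simp [hx]), by simp; omega⟩, harndt'⟩⟩, rfl⟩

lemma card_rec (s t n : ℕ) (hn : n ≠ 0) :
    arndtCount s t n = (∑ x ∈ S s t n, arndtCount s t (n - (x.1 + x.2))) + 1 := by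
  have e : T s t n ≃ Option ((x : ↥(S s t n)) × T s t (n - (x.1.1 + x.1.2))) :=
    (Equiv.ofBijective _ ⟨g_inj n hn, g_surj n hn⟩).symm
  rw [arndtCount, Nat.card_congr e, Finite.card_option]
  congr 1
  haveI : ∀ x : ↥(S s t n), Fintype (T s t (n - (x.1.1 + x.1.2))) := fun _ => Fintype.ofFinite _
  rw [Nat.card_eq_fintype_card, Fintype.card_sigma,
    ← Finset.sum_coe_sort (S s t n) (fun x => arndtCount s t (n - (x.1 + x.2)))]
  refine Finset.sum_congr rfl fun x _ => ?_
  rw [arndtCount, Nat.card_eq_fintype_card]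

/-- Number of admissible pairs with given sum. -/
def pc (s t m : ℕ) : ℕ :=
  ((Ioc 0 m ×ˢ Ioc 0 m).filter fun x => t * x.2 < s * x.1 ∧ x.1 + x.2 = m).card

lemma S_fiber (s t n m : ℕ) (hm : m ≤ n) :
    (S s t n).filter (fun x => x.1 + x.2 = m) =
      (Ioc 0 m ×ˢ Ioc 0 m).filter fun x => t * x.2 < s * x.1 ∧ x.1 + x.2 = m := by
  ext ⟨a, b⟩
  simp only [mem_filter, mem_product, mem_Ioc, mem_S]
  constructor
  · rintro ⟨⟨h1, h2, h3, h4⟩, h5⟩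
    exact ⟨⟨⟨h1, by omega⟩, ⟨h2, by omega⟩⟩, h3, h5⟩
  · rintro ⟨⟨⟨h1, -⟩, ⟨h2, -⟩⟩, h3, h5⟩
    exact ⟨⟨h1, h2, h3, by omega⟩, h5⟩

lemma sum_fiber (s t n : ℕ) :
    ∑ x ∈ S s t n, arndtCount s t (n - (x.1 + x.2)) =
      ∑ m ∈ range (n+1), pc s t m * arndtCount s t (n - m) := by
  rw [← Finset.sum_fiberwise_of_maps_to (g := fun x : ℕ × ℕ => x.1 + x.2) (t := range (n+1))
    (fun x hx => by simp only [mem_range]; have := (mem_S.1 hx).2.2.2; omega)]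
  refine Finset.sum_congr rfl fun m hm => ?_
  have hmn : m ≤ n := by simpa using Nat.lt_succ_iff.mp (mem_range.mp hm)
  calc ∑ x ∈ (S s t n).filter (fun x => x.1 + x.2 = m), arndtCount s t (n - (x.1 + x.2))
      = ∑ x ∈ (S s t n).filter (fun x => x.1 + x.2 = m), arndtCount s t (n - m) := by
        refine Finset.sum_congr rfl fun x hx => ?_
        rw [(mem_filter.1 hx).2]
    _ = pc s t m * arndtCount s t (n - m) := by
        rw [Finset.sum_const, S_fiber s t n m hmn, pc, smul_eq_mul]

lemma pc_zero (s t : ℕ) : pc s t 0 = 0 := by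
  simp [pc]

/-- `q n = ⌈ s n / (s+t) ⌉`. -/
def q (s t n : ℕ) : ℕ := (s * n) ⌈/⌉ (s + t)

lemma lt_q_iff (hs : 0 < s) {n r : ℕ} : r < q s t n ↔ (s + t) * r < s * n := by
  rw [← not_le, ← not_le, q]
  constructor
  · intro h h'
    exact h ((ceilDiv_le_iff_le_smul (by omega)).2 (by simpa [smul_eq_mul] using h'))
  · intro h h'
    exact h (by simpa [smul_eq_mul] using (ceilDiv_le_iff_le_smul (a := s + t) (by omega)).1 h')

lemma q_le_self (hs : 0 < s) (n : ℕ) : q s t n ≤ n := by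
  rw [q, ceilDiv_le_iff_le_smul (by omega : (0:ℕ) < s + t), smul_eq_mul]
  exact Nat.mul_le_mul_right n (by omega)

lemma pc_eq (hs : 0 < s) (ht : 0 < t) (m : ℕ) (hm : m ≠ 0) :
    pc s t m + 1 = q s t m := by
  have key : ((Ioc 0 m ×ˢ Ioc 0 m).filter fun x => t * x.2 < s * x.1 ∧ x.1 + x.2 = m)
      = (Ioo 0 (q s t m)).image (fun b => (m - b, b)) := by
    ext ⟨a, b⟩
    simp only [mem_filter, mem_product, mem_Ioc, mem_image, mem_Ioo, Prod.mk.injEq]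
    constructor
    · rintro ⟨⟨⟨h1, h2⟩, h3, h4⟩, h5, h6⟩
      refine ⟨b, ⟨h3, ?_⟩, by omega, rfl⟩
      rw [lt_q_iff hs]
      have e1 : s * a + s * b = s * m := by rw [← Nat.left_distrib, h6]
      have e2 : (s + t) * b = s * b + t * b := by ring
      omega
    · rintro ⟨b', ⟨hb1, hb2⟩, rfl, rfl⟩
      have hbm : b' ≤ m := by have := q_le_self (t := t) hs m; omega
      rw [lt_q_iff hs] at hb2
      have e1 : s * (m - b') + s * b' = s * m := by
        rw [← Nat.left_distrib]; congr 1; omega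
      have e2 : (s + t) * b' = s * b' + t * b' := by ring
      have h3 : t * b' < s * (m - b') := by omega
      have ha : 0 < m - b' := by
        rcases Nat.eq_zero_or_pos (m - b') with h | h
        · rw [h, Nat.mul_zero] at h3; omega
        · exact h
      exact ⟨⟨⟨ha, by omega⟩, ⟨hb1, hbm⟩⟩, h3, by omega⟩
  have hinj : Function.Injective (fun b : ℕ => (m - b, b)) := by
    intro x y hxy
    simpa using congrArg Prod.snd hxy
  rw [pc, key, Finset.card_image_of_injective _ hinj, Nat.card_Ioo]
  have hq : 0 < q s t m :=
    (lt_q_iff hs).2 (by rw [Nat.mul_zero]; exact Nat.mul_pos hs (Nat.pos_of_ne_zero hm))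
  omega

lemma q_zero (s t : ℕ) : q s t 0 = 0 := by simp [q]

lemma q_add (hs : 0 < s) (ht : 0 < t) (k : ℕ) :
    q s t (k + (s + t)) = q s t k + s := by
  rw [q, q, Nat.ceilDiv_eq_add_pred_div, Nat.ceilDiv_eq_add_pred_div]
  have e : s * (k + (s + t)) + (s + t) - 1 = (s * k + (s + t) - 1) + s * (s + t) := by
    have : s * (k + (s + t)) = s * k + s * (s + t) := by ring
    omega
  rw [e, Nat.add_mul_div_right _ _ (by omega : (0:ℕ) < s + t)]

lemma q_le_s (hs : 0 < s) {n : ℕ} (hn : n ≤ s + t) : q s t n ≤ s := by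
  rw [q, ceilDiv_le_iff_le_smul (by omega : (0:ℕ) < s + t), smul_eq_mul]
  calc s * n ≤ s * (s + t) := Nat.mul_le_mul_left s hn
    _ = (s + t) * s := by ring

/-- Cumulative count of the exponents `m_r` below `n`. -/
lemma M_cumul (hs : 0 < s) (ht : 0 < t) (n : ℕ) :
    ((range s).filter fun r => r + (r * t + 1) ⌈/⌉ s ≤ n).card
      + (if s + t ≤ n then q s t (n - (s + t)) else 0) = q s t n := by
  have hmr : ∀ r : ℕ, r + (r * t + 1) ⌈/⌉ s ≤ n ↔ r < q s t n := by
    intro r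
    rw [lt_q_iff hs]
    constructor
    · intro h
      have h1 : (r * t + 1) ⌈/⌉ s ≤ n - r := by omega
      have h2 : r * t + 1 ≤ s * (n - r) := by
        have := (ceilDiv_le_iff_le_smul hs).1 h1
        simpa [smul_eq_mul] using this
      have hrn : r ≤ n := by omega
      have e1 : s * (n - r) + s * r = s * n := by
        rw [← Nat.left_distrib]; congr 1; omega
      have e2 : (s + t) * r = s * r + t * r := by ring
      have e3 : r * t = t * r := by ring
      omega
    · intro h
      have e2 : (s + t) * r = s * r + t * r := by ring
      have hrn : r < n := by
        by_contra hc
        have : s * n ≤ s * r := Nat.mul_le_mul_left s (by omega)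
        omega
      have e1 : s * (n - r) + s * r = s * n := by
        rw [← Nat.left_distrib]; congr 1; omega
      have h2 : r * t + 1 ≤ s * (n - r) := by
        have e3 : r * t = t * r := by ring
        omega
      have := (ceilDiv_le_iff_le_smul hs).2 (show r * t + 1 ≤ s • (n - r) by rw [smul_eq_mul]; exact h2)
      omega
  have hfil : ((range s).filter fun r => r + (r * t + 1) ⌈/⌉ s ≤ n)
      = range (min s (q s t n)) := by
    ext r
    simp only [mem_filter, mem_range, hmr r, lt_min_iff]
  rw [hfil, Finset.card_range]
  by_cases h : s + t ≤ n
  · rw [if_pos h]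
    have e : n - (s + t) + (s + t) = n := by omega
    have := q_add hs ht (n - (s + t))
    rw [e] at this
    omega
  · rw [if_neg h]
    have := q_le_s (t := t) hs (n := n) (by omega)
    omega

open PowerSeries

/-- The all-ones power series. -/
noncomputable def one1 : PowerSeries ℤ := PowerSeries.mk fun _ => 1

lemma one_sub_X_mul_one1 : (1 - X) * one1 = 1 := by
  ext n
  rw [sub_mul, one_mul, map_sub]
  have : (X : PowerSeries ℤ) * one1 = X ^ 1 * one1 := by rw [pow_one]
  rw [this, coeff_X_pow_mul']
  cases n with
  | zero => simp [one1, coeff_mk, coeff_one]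
  | succ k => simp [one1, coeff_mk, coeff_one]

variable (s t) in
noncomputable def Q : PowerSeries ℤ := PowerSeries.mk fun n => (q s t n : ℤ)

variable (s t) in
noncomputable def M : PowerSeries ℤ :=
  ∑ r ∈ Finset.range s, (X : PowerSeries ℤ) ^ (r + (r * t + 1) ⌈/⌉ s)

variable (s t) in
noncomputable def P : PowerSeries ℤ := PowerSeries.mk fun m => (pc s t m : ℤ)

variable (s t) in
noncomputable def A : PowerSeries ℤ := PowerSeries.mk fun n => (arndtCount s t n : ℤ)

lemma M_mul_one1 (hs : 0 < s) (ht : 0 < t) :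
    M s t * one1 + X ^ (s + t) * Q s t = Q s t := by
  ext n
  rw [map_add, M, Finset.sum_mul, map_sum, coeff_X_pow_mul', Q, coeff_mk]
  have e1 : ∀ r ∈ Finset.range s,
      (coeff n) ((X : PowerSeries ℤ) ^ (r + (r * t + 1) ⌈/⌉ s) * one1)
        = if r + (r * t + 1) ⌈/⌉ s ≤ n then 1 else 0 := by
    intro r _
    rw [coeff_X_pow_mul']
    split_ifs with h
    · simp [one1, coeff_mk]
    · rfl
  rw [Finset.sum_congr rfl e1, Finset.sum_boole]
  simp only [Q, coeff_mk]
  have := M_cumul hs ht n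
  split_ifs with h
  · rw [if_pos h] at this
    exact_mod_cast this
  · rw [if_neg h] at this
    exact_mod_cast this

lemma P_one_Q (hs : 0 < s) (ht : 0 < t) : P s t + one1 = Q s t + 1 := by
  ext n
  rw [map_add, map_add, P, Q, coeff_mk, coeff_mk, coeff_one]
  cases n with
  | zero => simp [one1, coeff_mk, pc_zero, q_zero]
  | succ k =>
    simp only [one1, coeff_mk, Nat.succ_ne_zero, if_false, add_zero]
    have := pc_eq hs ht (k+1) (by omega)
    push_cast [← this]
    ring

lemma A_rec (s t : ℕ) : A s t = one1 + P s t * A s t := by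
  ext n
  rw [map_add, A, coeff_mk, coeff_mul]
  simp only [one1, coeff_mk]
  rw [Finset.Nat.sum_antidiagonal_eq_sum_range_succ_mk]
  simp only [P, A, coeff_mk]
  cases Nat.eq_zero_or_pos n with
  | inl h =>
    subst h
    simp [pc_zero, arndtCount_zero]
  | inr h =>
    have hrec := card_rec s t n (by omega)
    rw [sum_fiber] at hrec
    have : ((arndtCount s t n : ℤ)) =
        (∑ m ∈ range (n+1), (pc s t m : ℤ) * (arndtCount s t (n - m) : ℤ)) + 1 := by
      rw [hrec]
      push_cast
      ring
    rw [this]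
    ring

theorem main (s t : ℕ) (hs : 0 < s) (ht : 0 < t) :
    (1 - (X : PowerSeries ℤ) ^ (s + t) - M s t) * A s t = 1 - X ^ (s + t) := by
  have h1 : (1 - P s t) * A s t = one1 := by
    have := A_rec s t
    linear_combination this
  have h2 : (1 - (1 - X) * Q s t) * A s t = 1 := by
    have e : (1 - X) * ((1 - P s t) * A s t) = (1 - X) * one1 := by rw [h1]
    rw [one_sub_X_mul_one1] at e
    have hpq := P_one_Q hs ht
    have ho := one_sub_X_mul_one1
    linear_combination e + (1 - X) * A s t * hpq - A s t * ho
  have hM : M s t = (1 - X) * (1 - X ^ (s + t)) * Q s t := by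
    have hqm := M_mul_one1 hs ht
    have ho := one_sub_X_mul_one1
    linear_combination (1 - X) * hqm - M s t * ho
  linear_combination (1 - X ^ (s + t)) * h2 - A s t * hM

end ArndtGF

open PowerSeries in
theorem arndt_generating_function (s t : ℕ) (hs : 0 < s) (ht : 0 < t)
    (hco : Nat.Coprime s t) :
    (1 - (X : PowerSeries ℤ) ^ (s + t)
        - ∑ r ∈ Finset.range s, (X : PowerSeries ℤ) ^ (r + (r * t + 1) ⌈/⌉ s)) *
      PowerSeries.mk (fun n => (arndtCount s t n : ℤ)) =
    1 - (X : PowerSeries ℤ) ^ (s + t) := by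
  exact ArndtGF.main s t hs ht
end
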